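/- arXiv:1410.3042 — 8 statements merged into one kernel-verified Lean document; each statement's English description precedes it below -/
import Mathlib

section
/- 𝔠 is closed under multiplication: if a, b ∈ 𝔠 then ab ∈ 𝔠. -/
/-- The set 𝔠 of compass-constructable points in the plane ℂ: the smallest set
containing 0 and 1 and closed under taking intersection points of two distinct
circles whose centers and radius-defining points are constructable. -/
inductive Compass : ℂ → Prop
  | zero : Compass 0
  | one : Compass 1
  | circle_circle (a b c d z : ℂ) :
      Compass a → Compass b → Compass c → Compass d →
      ‖z - a‖ = ‖b - a‖ →
      ‖z - c‖ = ‖d - c‖ →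
      {w : ℂ | ‖w - a‖ = ‖b - a‖} ≠
        {w : ℂ | ‖w - c‖ = ‖d - c‖} →
      Compass z

theorem compass_mul (a b : ℂ) (ha : Compass a) (hb : Compass b) : Compass (a * b) := by
  induction hb with
  | zero => simpa using Compass.zero
  | one => simpa using ha
  | circle_circle c d e f z hc hd he hf h1 h2 hne ihc ihd ihe ihf =>
    rcases eq_or_ne a 0 with rfl | ha0
    · simpa using Compass.zero
    · have habs : ‖a‖ ≠ 0 := by simpa using ha0
      refine Compass.circle_circle (a*c) (a*d) (a*e) (a*f) (a*z) ihc ihd ihe ihf ?_ ?_ ?_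
      · rw [← mul_sub, ← mul_sub, norm_mul, norm_mul, h1]
      · rw [← mul_sub, ← mul_sub, norm_mul, norm_mul, h2]
      · intro hset
        apply hne
        ext w
        have key : ∀ u v : ℂ, ‖w - u‖ = ‖v - u‖ ↔
            ‖a*w - a*u‖ = ‖a*v - a*u‖ := by
          intro u v
          rw [← mul_sub, ← mul_sub, norm_mul, norm_mul]
          exact (mul_right_injective₀ habs).eq_iff.symm
        have hw1 : (a*w ∈ {w : ℂ | ‖w - a*c‖ = ‖a*d - a*c‖}) ↔
            (a*w ∈ {w : ℂ | ‖w - a*e‖ = ‖a*f - a*e‖}) := by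
          rw [hset]
        simp only [Set.mem_setOf_eq] at hw1 ⊢
        rw [key c d, key e f]
        exact hw1
end

section
/- 𝔠 is closed under addition: if a, b ∈ 𝔠 then a + b ∈ 𝔠. -/
/-- Two circles with distinct centers are distinct as sets. -/
private lemma circle_ne {c₁ c₂ : ℂ} {r₁ r₂ : ℝ} (h : c₁ ≠ c₂) (hr₁ : 0 ≤ r₁) (hr₂ : 0 ≤ r₂) :
    {w : ℂ | ‖w - c₁‖ = r₁} ≠ {w : ℂ | ‖w - c₂‖ = r₂} := by
  intro heq
  have H : ∀ w : ℂ, ‖w - c₁‖ = r₁ ↔ ‖w - c₂‖ = r₂ :=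
    fun w => Set.ext_iff.mp heq w
  have nsq : ∀ w : ℂ, ‖w - c₁‖ = r₁ → Complex.normSq (w - c₂) = r₂ ^ 2 := by
    intro w hw
    rw [← Complex.sq_norm, (H w).mp hw]
  have m1 : ‖(c₁ + (r₁ : ℂ)) - c₁‖ = r₁ := by
    simp [abs_of_nonneg hr₁]
  have m2 : ‖(c₁ - (r₁ : ℂ)) - c₁‖ = r₁ := by
    simp [abs_of_nonneg hr₁]
  have m3 : ‖(c₁ + (r₁ : ℂ) * Complex.I) - c₁‖ = r₁ := by
    simp [abs_of_nonneg hr₁]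
  have e1 := nsq _ m1
  have e2 := nsq _ m2
  have e3 := nsq _ m3
  simp only [Complex.normSq_apply, Complex.add_re, Complex.add_im, Complex.sub_re,
    Complex.sub_im, Complex.mul_re, Complex.mul_im, Complex.ofReal_re, Complex.ofReal_im,
    Complex.I_re, Complex.I_im] at e1 e2 e3
  have hxr : (c₁.re - c₂.re) * r₁ = 0 := by linear_combination (e1 - e2) / 4
  have hyr : (c₁.im - c₂.im) * r₁ = 0 := by linear_combination hxr - (e1 - e3) / 2
  have hr10 : r₁ = 0 := by
    by_contra hr
    apply h
    have hx0 : c₁.re - c₂.re = 0 := by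
      rcases mul_eq_zero.mp hxr with h' | h'
      · exact h'
      · exact absurd h' hr
    have hy0 : c₁.im - c₂.im = 0 := by
      rcases mul_eq_zero.mp hyr with h' | h'
      · exact h'
      · exact absurd h' hr
    exact Complex.ext (by linarith) (by linarith)
  -- now the first circle is the single point c₁; use points of the second circle
  have p1 : ‖(c₂ + (r₂ : ℂ)) - c₂‖ = r₂ := by simp [abs_of_nonneg hr₂]
  have p2 : ‖(c₂ - (r₂ : ℂ)) - c₂‖ = r₂ := by simp [abs_of_nonneg hr₂]
  have q1 := (H _).mpr p1
  have q2 := (H _).mpr p2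
  rw [hr10] at q1 q2
  have z1 : (c₂ + (r₂ : ℂ)) - c₁ = 0 := norm_eq_zero.mp q1
  have z2 : (c₂ - (r₂ : ℂ)) - c₁ = 0 := norm_eq_zero.mp q2
  have hr2c : (r₂ : ℂ) = 0 := by linear_combination (z1 - z2) / 2
  exact h (by linear_combination -z1 + hr2c)

/-- Convenient wrapper for the constructor: two circles with distinct centers. -/
private lemma step {a b c d : ℂ} (z : ℂ) (ha : Compass a) (hb : Compass b) (hc : Compass c)
    (hd : Compass d)
    (h1 : ‖z - a‖ = ‖b - a‖)
    (h2 : ‖z - c‖ = ‖d - c‖)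
    (hac : a ≠ c) : Compass z :=
  Compass.circle_circle a b c d z ha hb hc hd h1 h2
    (circle_ne hac (norm_nonneg _) (norm_nonneg _))

/-- The sixth root of unity `e^{iπ/3}`. -/
private noncomputable def uu : ℂ := ⟨1 / 2, Real.sqrt 3 / 2⟩

private lemma uu_re : uu.re = 1 / 2 := rfl
private lemma uu_im : uu.im = Real.sqrt 3 / 2 := rfl

private lemma sqrt3_sq : Real.sqrt 3 * Real.sqrt 3 = 3 :=
  Real.mul_self_sqrt (by norm_num)

private lemma sqrt3_pos : 0 < Real.sqrt 3 := Real.sqrt_pos.mpr (by norm_num)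

private lemma uu_abs : ‖uu‖ = 1 := by
  rw [Complex.norm_def]
  have : Complex.normSq uu = 1 := by
    rw [Complex.normSq_apply, uu_re, uu_im]
    nlinarith [sqrt3_sq]
  rw [this, Real.sqrt_one]

private lemma uu_conj : (starRingEnd ℂ) uu = 1 - uu := by
  apply Complex.ext <;>
    simp [Complex.conj_re, Complex.conj_im, Complex.sub_re, Complex.sub_im, uu_re, uu_im] <;>
    norm_num

private lemma uu_sub_one_abs : ‖uu - 1‖ = 1 := by
  have h : uu - 1 = -((starRingEnd ℂ) uu) := by rw [uu_conj]; ring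
  rw [h, norm_neg, Complex.norm_conj, uu_abs]

private lemma one_sub_uu_abs : ‖1 - uu‖ = 1 := by
  rw [show (1 : ℂ) - uu = -(uu - 1) by ring, norm_neg, uu_sub_one_abs]

private lemma uu_ne_zero : uu ≠ 0 := by
  intro h
  have := congrArg Complex.re h
  rw [uu_re] at this
  norm_num at this

private lemma uu_ne_one : uu ≠ 1 := by
  intro h
  have h2 := congrArg Complex.im h
  rw [uu_im, Complex.one_im] at h2
  have := sqrt3_pos
  linarith

private lemma uu_ne_one_sub : uu ≠ 1 - uu := by
  intro h
  have := congrArg Complex.im h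
  rw [uu_im, Complex.sub_im, Complex.one_im, uu_im] at this
  have h3 : Real.sqrt 3 = 0 := by linarith
  exact absurd h3 (ne_of_gt sqrt3_pos)

/-- Rotation of a constructable point by 60° about the origin. -/
private lemma compass_rot {a : ℂ} (ha0 : a ≠ 0) (ha : Compass a) : Compass (a * uu) := by
  refine step (a := 0) (b := a) (c := a) (d := 0) _ Compass.zero ha ha Compass.zero ?_ ?_
    (Ne.symm ha0)
  · rw [sub_zero, sub_zero, norm_mul, uu_abs, mul_one]
  · rw [show a * uu - a = a * (uu - 1) by ring, norm_mul, uu_sub_one_abs, mul_one,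
      zero_sub, norm_neg]

/-- Rotation by -60° about the origin. -/
private lemma compass_rot' {a : ℂ} (ha0 : a ≠ 0) (ha : Compass a) : Compass (a * (1 - uu)) := by
  refine step (a := 0) (b := a) (c := a) (d := 0) _ Compass.zero ha ha Compass.zero ?_ ?_
    (Ne.symm ha0)
  · rw [sub_zero, sub_zero, norm_mul, one_sub_uu_abs, mul_one]
  · rw [show a * (1 - uu) - a = a * (-uu) by ring, norm_mul, norm_neg, uu_abs, mul_one,
      zero_sub, norm_neg]

/-- Doubling a constructable point. -/
private lemma compass_two_mul {a : ℂ} (ha : Compass a) : Compass (2 * a) := by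
  by_cases ha0 : a = 0
  · subst ha0; simpa using Compass.zero
  · have hP : Compass (a * uu) := compass_rot ha0 ha
    have hp2 : Compass (a * (1 + uu)) := by
      refine step (a := a) (b := 0) (c := a * uu) (d := a) _ ha Compass.zero hP ha ?_ ?_ ?_
      · rw [show a * (1 + uu) - a = a * uu by ring, norm_mul, uu_abs, mul_one, zero_sub, norm_neg]
      · rw [show a * (1 + uu) - a * uu = a by ring,
          show a - a * uu = a * (1 - uu) by ring, norm_mul, one_sub_uu_abs, mul_one]
      · intro h
        have h1 : a * 1 = a * uu := by linear_combination h
        exact uu_ne_one (mul_left_cancel₀ ha0 h1).symm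
    refine step (a := a) (b := 0) (c := a * (1 + uu)) (d := a * uu) _ ha Compass.zero hp2 hP
      ?_ ?_ ?_
    · rw [show 2 * a - a = a by ring, zero_sub, norm_neg]
    · rw [show 2 * a - a * (1 + uu) = a * (1 - uu) by ring, norm_mul, one_sub_uu_abs, mul_one,
        show a * uu - a * (1 + uu) = -a by ring, norm_neg]
    · intro h
      have h1 : a * 1 = a * (1 + uu) := by linear_combination h
      have h2 := mul_left_cancel₀ ha0 h1
      exact uu_ne_zero (by linear_combination -h2)

/-- Distance transfer: the reflection of `b` across the perpendicular bisector of `0` and `a`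
is constructable; it lies at distance `|b|` from `a`. -/
private lemma compass_transfer {a : ℂ} (b : ℂ) (ha0 : a ≠ 0) (ha : Compass a) (hb : Compass b) :
    Compass (a - a * (starRingEnd ℂ) b / (starRingEnd ℂ) a) := by
  have hca : (starRingEnd ℂ) a ≠ 0 := by
    simpa using ha0
  have hP : Compass (a * uu) := compass_rot ha0 ha
  have hQ : Compass (a * (1 - uu)) := compass_rot' ha0 ha
  set z := a - a * (starRingEnd ℂ) b / (starRingEnd ℂ) a with hz
  refine step (a := a * uu) (b := b) (c := a * (1 - uu)) (d := b) _ hP hb hQ hb ?_ ?_ ?_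
  · have key : z - a * uu = (a / (starRingEnd ℂ) a) * (starRingEnd ℂ) (a * uu - b) := by
      rw [hz, map_sub, map_mul, uu_conj]
      field_simp
      ring
    rw [key, norm_mul, norm_div, Complex.norm_conj, div_self (norm_ne_zero_iff.mpr ha0), one_mul,
      Complex.norm_conj, show a * uu - b = -(b - a * uu) by ring, norm_neg]
  · have key : z - a * (1 - uu) = (a / (starRingEnd ℂ) a) * (starRingEnd ℂ) (a * (1 - uu) - b) := by
      rw [hz, map_sub, map_mul, map_sub, map_one, uu_conj]
      field_simp
      ring
    rw [key, norm_mul, norm_div, Complex.norm_conj, div_self (norm_ne_zero_iff.mpr ha0), one_mul,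
      Complex.norm_conj, show a * (1 - uu) - b = -(b - a * (1 - uu)) by ring, norm_neg]
  · intro h
    exact uu_ne_one_sub (mul_left_cancel₀ ha0 h)

private lemma transfer_dist {a b : ℂ} (ha0 : a ≠ 0) :
    ‖a - a * (starRingEnd ℂ) b / (starRingEnd ℂ) a - a‖ = ‖b‖ := by
  have hca : (starRingEnd ℂ) a ≠ 0 := by simpa using ha0
  rw [show a - a * (starRingEnd ℂ) b / (starRingEnd ℂ) a - a
      = -(a * (starRingEnd ℂ) b / (starRingEnd ℂ) a) by ring, norm_neg, norm_div, norm_mul,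
    Complex.norm_conj, Complex.norm_conj, mul_comm,
    mul_div_assoc, div_self (norm_ne_zero_iff.mpr ha0), mul_one]

theorem compass_add (a b : ℂ) (ha : Compass a) (hb : Compass b) : Compass (a + b) := by
  by_cases ha0 : a = 0
  · subst ha0; simpa using hb
  by_cases hb0 : b = 0
  · subst hb0; simpa using ha
  by_cases hab : a = b
  · subst hab
    simpa [two_mul] using compass_two_mul ha
  · have hb' : Compass (a - a * (starRingEnd ℂ) b / (starRingEnd ℂ) a) :=
      compass_transfer b ha0 ha hb
    have ha' : Compass (b - b * (starRingEnd ℂ) a / (starRingEnd ℂ) b) :=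
      compass_transfer a hb0 hb ha
    refine step (a := a) (b := a - a * (starRingEnd ℂ) b / (starRingEnd ℂ) a)
      (c := b) (d := b - b * (starRingEnd ℂ) a / (starRingEnd ℂ) b) _ ha hb' hb ha' ?_ ?_ hab
    · rw [transfer_dist ha0, add_sub_cancel_left]
    · rw [transfer_dist hb0, show a + b - b = a by ring]
end

section
/- The points 3/2 and 1/2 belong to 𝔠; in particular the midpoint of the segment with endpoints 0 and 1 is compass-constructable. -/
lemma absEqAux {x y : ℂ} (h : Complex.normSq x = Complex.normSq y) :
    ‖x‖ = ‖y‖ := by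
  rw [Complex.norm_def, Complex.norm_def, h]

lemma absNeAux {x y : ℂ} (h : Complex.normSq x ≠ Complex.normSq y) :
    ‖x‖ ≠ ‖y‖ := by
  intro he
  exact h (by rw [← Complex.sq_norm, ← Complex.sq_norm, he])

lemma nsqAux (x y : ℝ) (z : ℂ)
    (h : z = Complex.ofReal x + Complex.ofReal y * Complex.I) :
    Complex.normSq z = x ^ 2 + y ^ 2 := by
  rw [h, Complex.normSq_add_mul_I]

noncomputable def omA : ℂ := Complex.ofReal (1/2) + Complex.ofReal (Real.sqrt 3 / 2) * Complex.I
noncomputable def omB : ℂ := Complex.ofReal (1/2) + Complex.ofReal (-(Real.sqrt 3 / 2)) * Complex.I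
noncomputable def pA : ℂ := Complex.ofReal (1/4) + Complex.ofReal (Real.sqrt 15 / 4) * Complex.I
noncomputable def pB : ℂ := Complex.ofReal (1/4) + Complex.ofReal (-(Real.sqrt 15 / 4)) * Complex.I

/-- 3/2 and 1/2 are compass-constructable; in particular the midpoint of the
segment with endpoints 0 and 1 is compass-constructable. -/
theorem three_halves_and_one_half_constructable :
    Compass (3 / 2) ∧ Compass (1 / 2) := by
  have s3 : Real.sqrt 3 ^ 2 = 3 := Real.sq_sqrt (by norm_num)
  have s15 : Real.sqrt 15 ^ 2 = 15 := Real.sq_sqrt (by norm_num)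
  -- distinctness of unit circles around 0 and 1
  have hdist01 : {w : ℂ | ‖w - 0‖ = ‖(1 : ℂ) - 0‖} ≠
      {w : ℂ | ‖w - 1‖ = ‖(0 : ℂ) - 1‖} := by
    intro h
    have h2 := Set.ext_iff.mp h (-1)
    have hin : ‖(-1 : ℂ) - 0‖ = ‖(1 : ℂ) - 0‖ := absEqAux (by
      rw [nsqAux (-1) 0 _ (by push_cast; ring), nsqAux 1 0 _ (by push_cast; ring)]; norm_num)
    have hout : ‖(-1 : ℂ) - 1‖ ≠ ‖(0 : ℂ) - 1‖ := absNeAux (by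
      rw [nsqAux (-2) 0 _ (by push_cast; ring), nsqAux (-1) 0 _ (by push_cast; ring)]; norm_num)
    exact hout (h2.mp hin)
  -- ω = (1 + √3 i)/2
  have homA : Compass omA := by
    refine Compass.circle_circle 0 1 1 0 omA Compass.zero Compass.one Compass.one Compass.zero
      (absEqAux ?_) (absEqAux ?_) hdist01
    · rw [nsqAux (1/2) (Real.sqrt 3 / 2) _ (by unfold omA; push_cast; ring),
        nsqAux 1 0 _ (by push_cast; ring)]
      nlinarith [s3]
    · rw [nsqAux (-(1/2)) (Real.sqrt 3 / 2) _ (by unfold omA; push_cast; ring),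
        nsqAux (-1) 0 _ (by push_cast; ring)]
      nlinarith [s3]
  have homB : Compass omB := by
    refine Compass.circle_circle 0 1 1 0 omB Compass.zero Compass.one Compass.one Compass.zero
      (absEqAux ?_) (absEqAux ?_) hdist01
    · rw [nsqAux (1/2) (-(Real.sqrt 3 / 2)) _ (by unfold omB; push_cast; ring),
        nsqAux 1 0 _ (by push_cast; ring)]
      nlinarith [s3]
    · rw [nsqAux (-(1/2)) (-(Real.sqrt 3 / 2)) _ (by unfold omB; push_cast; ring),
        nsqAux (-1) 0 _ (by push_cast; ring)]
      nlinarith [s3]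
  -- 2
  have h2c : Compass 2 := by
    refine Compass.circle_circle 1 0 omA omB 2 Compass.one Compass.zero homA homB
      (absEqAux ?_) (absEqAux ?_) ?_
    · rw [nsqAux 1 0 _ (by push_cast; ring), nsqAux (-1) 0 _ (by push_cast; ring)]; norm_num
    · rw [nsqAux (3/2) (-(Real.sqrt 3 / 2)) _ (by unfold omA; push_cast; ring),
        nsqAux 0 (-(Real.sqrt 3)) _ (by unfold omA omB; push_cast; ring)]
      nlinarith [s3]
    · intro h
      have h2 := Set.ext_iff.mp h 0
      have hin : ‖(0 : ℂ) - 1‖ = ‖(0 : ℂ) - 1‖ := rfl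
      have hout : ‖(0 : ℂ) - omA‖ ≠ ‖omB - omA‖ := absNeAux (by
        rw [nsqAux (-(1/2)) (-(Real.sqrt 3 / 2)) _ (by unfold omA; push_cast; ring),
          nsqAux 0 (-(Real.sqrt 3)) _ (by unfold omA omB; push_cast; ring)]
        intro he; nlinarith [s3])
      exact hout (h2.mp hin)
  -- p = (1 + √15 i)/4
  have hdist02 : {w : ℂ | ‖w - 0‖ = ‖(1 : ℂ) - 0‖} ≠
      {w : ℂ | ‖w - 2‖ = ‖(0 : ℂ) - 2‖} := by
    intro h
    have h2 := Set.ext_iff.mp h (-1)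
    have hin : ‖(-1 : ℂ) - 0‖ = ‖(1 : ℂ) - 0‖ := absEqAux (by
      rw [nsqAux (-1) 0 _ (by push_cast; ring), nsqAux 1 0 _ (by push_cast; ring)]; norm_num)
    have hout : ‖(-1 : ℂ) - 2‖ ≠ ‖(0 : ℂ) - 2‖ := absNeAux (by
      rw [nsqAux (-3) 0 _ (by push_cast; ring), nsqAux (-2) 0 _ (by push_cast; ring)]; norm_num)
    exact hout (h2.mp hin)
  have hpA : Compass pA := by
    refine Compass.circle_circle 0 1 2 0 pA Compass.zero Compass.one h2c Compass.zero
      (absEqAux ?_) (absEqAux ?_) hdist02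
    · rw [nsqAux (1/4) (Real.sqrt 15 / 4) _ (by unfold pA; push_cast; ring),
        nsqAux 1 0 _ (by push_cast; ring)]
      nlinarith [s15]
    · rw [nsqAux (-(7/4)) (Real.sqrt 15 / 4) _ (by unfold pA; push_cast; ring),
        nsqAux (-2) 0 _ (by push_cast; ring)]
      nlinarith [s15]
  have hpB : Compass pB := by
    refine Compass.circle_circle 0 1 2 0 pB Compass.zero Compass.one h2c Compass.zero
      (absEqAux ?_) (absEqAux ?_) hdist02
    · rw [nsqAux (1/4) (-(Real.sqrt 15 / 4)) _ (by unfold pB; push_cast; ring),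
        nsqAux 1 0 _ (by push_cast; ring)]
      nlinarith [s15]
    · rw [nsqAux (-(7/4)) (-(Real.sqrt 15 / 4)) _ (by unfold pB; push_cast; ring),
        nsqAux (-2) 0 _ (by push_cast; ring)]
      nlinarith [s15]
  -- 1/2
  have hhalf : Compass (1/2) := by
    refine Compass.circle_circle pA 0 pB 0 (1/2) hpA Compass.zero hpB Compass.zero
      (absEqAux ?_) (absEqAux ?_) ?_
    · rw [nsqAux (1/4) (-(Real.sqrt 15 / 4)) _ (by unfold pA; push_cast; ring),
        nsqAux (-(1/4)) (-(Real.sqrt 15 / 4)) _ (by unfold pA; push_cast; ring)]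
      ring
    · rw [nsqAux (1/4) (Real.sqrt 15 / 4) _ (by unfold pB; push_cast; ring),
        nsqAux (-(1/4)) (Real.sqrt 15 / 4) _ (by unfold pB; push_cast; ring)]
      ring
    · intro h
      have h2 := Set.ext_iff.mp h (pA + 1)
      have hin : ‖pA + 1 - pA‖ = ‖0 - pA‖ := absEqAux (by
        rw [nsqAux 1 0 _ (by push_cast; ring),
          nsqAux (-(1/4)) (-(Real.sqrt 15 / 4)) _ (by unfold pA; push_cast; ring)]
        nlinarith [s15])
      have hout : ‖pA + 1 - pB‖ ≠ ‖0 - pB‖ := absNeAux (by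
        rw [nsqAux 1 (Real.sqrt 15 / 2) _ (by unfold pA pB; push_cast; ring),
          nsqAux (-(1/4)) (Real.sqrt 15 / 4) _ (by unfold pB; push_cast; ring)]
        intro he; nlinarith [s15])
      exact hout (h2.mp hin)
  -- 3/2
  have h32 : Compass (3/2) := by
    refine Compass.circle_circle 1 (1/2) (1/2) pA (3/2) Compass.one hhalf hhalf hpA
      (absEqAux ?_) (absEqAux ?_) ?_
    · rw [nsqAux (1/2) 0 _ (by push_cast; ring), nsqAux (-(1/2)) 0 _ (by push_cast; ring)]
      ring
    · rw [nsqAux 1 0 _ (by push_cast; ring),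
        nsqAux (-(1/4)) (Real.sqrt 15 / 4) _ (by unfold pA; push_cast; ring)]
      nlinarith [s15]
    · intro h
      have h2 := Set.ext_iff.mp h (-(1/2))
      have hout : ‖(-(1/2) : ℂ) - 1‖ ≠ ‖(1/2 : ℂ) - 1‖ := absNeAux (by
        rw [nsqAux (-(3/2)) 0 _ (by push_cast; ring), nsqAux (-(1/2)) 0 _ (by push_cast; ring)]
        norm_num)
      have hin : ‖(-(1/2) : ℂ) - 1/2‖ = ‖pA - 1/2‖ := absEqAux (by
        rw [nsqAux (-1) 0 _ (by push_cast; ring),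
          nsqAux (-(1/4)) (Real.sqrt 15 / 4) _ (by unfold pA; push_cast; ring)]
        nlinarith [s15])
      exact hout (h2.mpr hin)
  exact ⟨by norm_num at h32 ⊢; exact h32, by norm_num at hhalf ⊢; exact hhalf⟩
end

section
/- Let O, P ∈ ℂ, let r > 0 with dist(O, P) > r, and suppose M and N are two distinct points each lying on the circle of center O and radius r and on the circle with diameter OP (i.e. |M − O| = r, dist(M, midpoint(O,P)) = dist(O,P)/2, and similarly for N). Then the inversion of P in the circle of center O and radius r equals the orthogonal projection of O onto line MN. -/
open EuclideanGeometry

/-- If M and N are the two intersection points of the circle Ω of center O and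
radius r with the circle on diameter OP (P exterior to Ω), then the inversion of
P in Ω is the foot of the perpendicular from O to line MN. -/
theorem inversion_eq_proj_onto_chord (O P : ℂ) (r : ℝ) (hr : 0 < r)
    (hP : r < dist O P) (M N : ℂ) (hMN : M ≠ N)
    (hM₁ : ‖M - O‖ = r)
    (hM₂ : dist M (midpoint ℝ O P) = dist O P / 2)
    (hN₁ : ‖N - O‖ = r)
    (hN₂ : dist N (midpoint ℝ O P) = dist O P / 2) :
    EuclideanGeometry.inversion O r P =
      EuclideanGeometry.orthogonalProjection (affineSpan ℝ ({M, N} : Set ℂ)) O := by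
  set v : ℂ := P - O with hv_def
  have hv : v ≠ 0 := by
    intro h
    have : P = O := by rwa [hv_def, sub_eq_zero] at h
    rw [this] at hP
    simp at hP
    linarith
  have hmid : midpoint ℝ O P = (O + P) / 2 := by
    rw [midpoint_eq_smul_add, invOf_eq_inv, Complex.real_smul]
    push_cast
    ring
  -- key inner-product fact
  have key : ∀ X : ℂ, ‖X - O‖ = r →
      dist X (midpoint ℝ O P) = dist O P / 2 →
      (X.re - O.re) * v.re + (X.im - O.im) * v.im = r ^ 2 := by
    intro X h1 h2
    have e1 : Complex.normSq (X - O) = r ^ 2 := by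
      rw [← Complex.sq_norm, h1]
    rw [hmid, Complex.dist_eq, Complex.dist_eq] at h2
    have h2' : ‖2 * X - (O + P)‖ = ‖O - P‖ := by
      have : 2 * X - (O + P) = 2 * (X - (O + P) / 2) := by ring
      rw [this, norm_mul, h2]
      simp
      ring
    have e2 : Complex.normSq (2 * X - (O + P)) = Complex.normSq (O - P) := by
      rw [← Complex.sq_norm, ← Complex.sq_norm (O - P), h2']
    simp only [Complex.normSq_apply, Complex.sub_re, Complex.sub_im, Complex.add_re,
      Complex.add_im, Complex.mul_re, Complex.mul_im, Complex.re_ofNat,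
      Complex.im_ofNat] at e1 e2
    simp only [hv_def, Complex.sub_re, Complex.sub_im]
    nlinarith [e1, e2]
  have hMv := key M hM₁ hM₂
  have hNv := key N hN₁ hN₂
  -- the inversion point
  set Q : ℂ := EuclideanGeometry.inversion O r P with hQdef
  have hnv : Complex.normSq v ≠ 0 := by
    simpa [Complex.normSq_eq_zero] using hv
  set t : ℝ := r ^ 2 / Complex.normSq v with ht_def
  have hQO : Q - O = (t : ℂ) * v := by
    rw [hQdef, EuclideanGeometry.inversion]
    have hdPO : dist P O = ‖v‖ := by rw [Complex.dist_eq]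
    simp only [vsub_eq_sub, vadd_eq_add, ← hv_def, hdPO, Complex.real_smul, ht_def]
    push_cast [div_pow, Complex.sq_norm]
    ring
  have hQre : Q.re - O.re = t * v.re := by
    have := congrArg Complex.re hQO
    simpa [Complex.sub_re, Complex.mul_re] using this
  have hQim : Q.im - O.im = t * v.im := by
    have := congrArg Complex.im hQO
    simpa [Complex.sub_im, Complex.mul_im] using this
  have hvsq : v.re ^ 2 + v.im ^ 2 = Complex.normSq v := by
    simp [Complex.normSq_apply]; ring
  have hQv : (Q.re - O.re) * v.re + (Q.im - O.im) * v.im = r ^ 2 := by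
    rw [hQre, hQim, ht_def]
    field_simp
    linear_combination hvsq
  -- M - Q and N - Q are orthogonal to v
  have hMQ : (M - Q).re * v.re + (M - Q).im * v.im = 0 := by
    simp only [Complex.sub_re, Complex.sub_im]
    linear_combination hMv - hQv
  have hNQ : (N - Q).re * v.re + (N - Q).im * v.im = 0 := by
    simp only [Complex.sub_re, Complex.sub_im]
    linear_combination hNv - hQv
  -- every vector orthogonal to v is a real multiple of I * v
  have perp : ∀ w : ℂ, w.re * v.re + w.im * v.im = 0 →
      ∃ c : ℝ, w = (c : ℝ) • (Complex.I * v) := by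
    intro w hw
    refine ⟨(w.im * v.re - w.re * v.im) / Complex.normSq v, ?_⟩
    rw [Complex.real_smul]
    apply Complex.ext
    · simp only [Complex.mul_re, Complex.mul_im, Complex.ofReal_re, Complex.ofReal_im,
        Complex.I_re, Complex.I_im]
      rw [← hvsq] at hnv ⊢
      field_simp
      linear_combination v.re * hw
    · simp only [Complex.mul_re, Complex.mul_im, Complex.ofReal_re, Complex.ofReal_im,
        Complex.I_re, Complex.I_im]
      rw [← hvsq] at hnv ⊢
      field_simp
      linear_combination v.im * hw
  obtain ⟨a, ha⟩ := perp (M - Q) hMQ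
  obtain ⟨b, hb⟩ := perp (N - Q) hNQ
  have hu : Complex.I * v ≠ 0 := mul_ne_zero Complex.I_ne_zero hv
  have hab : a ≠ b := by
    intro h
    apply hMN
    have : M - Q = N - Q := by rw [ha, hb, h]
    exact sub_left_inj.mp this
  -- Q lies on line MN
  have hQmem : Q ∈ affineSpan ℝ ({M, N} : Set ℂ) := by
    have h1 : Q = AffineMap.lineMap M N (a / (a - b)) := by
      have h2 : M - Q = ((a : ℝ) : ℂ) * (Complex.I * v) := by
        rw [ha, Complex.real_smul]
      have h3 : N - Q = ((b : ℝ) : ℂ) * (Complex.I * v) := by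
        rw [hb, Complex.real_smul]
      have hab' : ((a : ℂ) - b) ≠ 0 := by
        rw [← Complex.ofReal_sub, Complex.ofReal_ne_zero]
        exact sub_ne_zero.mpr hab
      have hNM : N - M = ((b : ℂ) - a) * (Complex.I * v) := by
        linear_combination h3 - h2
      simp only [AffineMap.lineMap_apply_module, Complex.real_smul]
      push_cast
      have h4 : ((a : ℂ) / ((a : ℂ) - b)) * (N - M) = -((a : ℂ) * (Complex.I * v)) := by
        rw [hNM]
        field_simp
        ring
      linear_combination -h2 - h4
    rw [h1]
    exact AffineMap.lineMap_mem_affineSpan_pair _ _ _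
  -- Q - O is orthogonal to the direction of line MN
  haveI : Nonempty (affineSpan ℝ ({M, N} : Set ℂ)) :=
    ⟨⟨M, subset_affineSpan ℝ _ (by simp)⟩⟩
  have hMNv : (M - N).re * v.re + (M - N).im * v.im = 0 := by
    simp only [Complex.sub_re, Complex.sub_im]
    linear_combination hMv - hNv
  have hQperp : Q ∈ AffineSubspace.mk' O (affineSpan ℝ ({M, N} : Set ℂ)).directionᗮ := by
    rw [AffineSubspace.mem_mk']
    rw [direction_affineSpan, vectorSpan_pair]
    rw [Submodule.mem_orthogonal_singleton_iff_inner_right]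
    have hv1 : (Q : ℂ) -ᵥ O = (t : ℂ) * v := hQO
    have hv2 : M -ᵥ N = M - N := rfl
    rw [hv1, hv2, Complex.inner]
    simp only [Complex.mul_re, Complex.conj_re, Complex.conj_im, Complex.ofReal_re,
      Complex.ofReal_im, Complex.mul_im, Complex.sub_re, Complex.sub_im]
    simp only [Complex.sub_re, Complex.sub_im] at hMNv
    linear_combination t * hMNv
  have hinter := EuclideanGeometry.inter_eq_singleton_orthogonalProjection
    (s := affineSpan ℝ ({M, N} : Set ℂ)) O
  have hfin : Q ∈ ((affineSpan ℝ ({M, N} : Set ℂ)) : Set ℂ) ∩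
      AffineSubspace.mk' O (affineSpan ℝ ({M, N} : Set ℂ)).directionᗮ := ⟨hQmem, hQperp⟩
  rw [hinter] at hfin
  exact hfin
end

section
/- Let A, B, P ∈ ℂ with A ≠ B and P not on line AB, let r > 0, let N be the orthogonal projection of P onto line AB, and let I = inversion P r N. Then the image of line AB under the inversion z ↦ inversion P r z equals the circle with diameter PI with the point P removed: {inversion P r X : X ∈ line AB} = {Y ∈ ℂ : dist(Y, midpoint(P,I)) = dist(P,I)/2} \ {P}. -/
open EuclideanGeometry AffineSubspace

/-- The image of the line AB under inversion in a circle centered at a point P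
not on the line is the circle with diameter P I, with the point P removed, where
I is the inversion of the foot of the perpendicular from P to AB. -/
theorem inversion_image_of_line (A B P : ℂ) (hAB : A ≠ B)
    (hP : P ∉ affineSpan ℝ ({A, B} : Set ℂ)) (r : ℝ) (hr : 0 < r)
    (N I : ℂ)
    (hN : N = EuclideanGeometry.orthogonalProjection (affineSpan ℝ ({A, B} : Set ℂ)) P)
    (hI : I = EuclideanGeometry.inversion P r N) :
    (fun X => EuclideanGeometry.inversion P r X) ''
        (affineSpan ℝ ({A, B} : Set ℂ) : Set ℂ) =
      {Y : ℂ | dist Y (midpoint ℝ P I) = dist P I / 2} \ {P} := by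
  set L := affineSpan ℝ ({A, B} : Set ℂ) with hL
  have hNL : N ∈ L := hN ▸ (EuclideanGeometry.orthogonalProjection _ P).2
  have hNP : N ≠ P := fun h => hP (h ▸ hNL)
  set Q := EuclideanGeometry.reflection L P with hQ
  have hQform : Q = (N - P) + N := by
    rw [hQ, EuclideanGeometry.reflection_apply', ← hN]
    rfl
  have hQP : Q - P = 2 * (N - P) := by rw [hQform]; ring
  have hQneP : Q ≠ P := by
    intro h
    exact hP ((EuclideanGeometry.reflection_eq_self_iff P).mp h)
  -- direction of L
  have hdirL : L.direction = vectorSpan ℝ ({A, B} : Set ℂ) := direction_affineSpan _ _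
  have hNPo : N - P ∈ L.directionᗮ := by
    have := EuclideanGeometry.orthogonalProjection_vsub_mem_direction_orthogonal L P
    rw [← hN] at this
    simpa using this
  have hfinL : Module.finrank ℝ L.direction = 1 := by
    rw [hdirL, vectorSpan_pair, finrank_span_singleton (by simpa using sub_ne_zero_of_ne hAB)]
  have hdir : L.direction = (ℝ ∙ (N - P))ᗮ := by
    apply Submodule.eq_of_le_of_finrank_eq
    · intro x hx
      rw [Submodule.mem_orthogonal_singleton_iff_inner_right]
      exact (Submodule.mem_orthogonal' _ _).mp hNPo x hx
    · rw [hfinL]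
      have h2 : Module.finrank ℝ ℂ = 2 := Complex.finrank_real_complex
      have := Submodule.finrank_add_finrank_orthogonal (K := ℝ ∙ (N - P)) (E := ℂ)
      rw [finrank_span_singleton (sub_ne_zero_of_ne hNP), h2] at this
      omega
  -- line = perpBisector
  have hperp' : L = perpBisector P Q := by
    have hNmem : N ∈ perpBisector P Q := by
      rw [mem_perpBisector_iff_dist_eq]
      rw [dist_eq_norm, dist_eq_norm, hQform, show N - ((N - P) + N) = -(N - P) by ring,
        norm_neg]
    rw [eq_iff_direction_eq_of_mem hNL hNmem, hdir, direction_perpBisector]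
    congr 1
    have : Q -ᵥ P = (2:ℝ) • (N - P) := by
      rw [vsub_eq_sub, hQP, Complex.real_smul]; norm_num
    rw [this, Submodule.span_singleton_smul_eq (by norm_num : (2:ℝ) ≠ 0).isUnit.ne_zero.isUnit]
  have hperp : (L : Set ℂ) = (perpBisector P Q : Set ℂ) := by rw [hperp']
  -- distances
  have hd : dist N P ≠ 0 := dist_ne_zero.2 hNP
  have hdQ : dist Q P = 2 * dist N P := by
    rw [dist_eq_norm, dist_eq_norm, hQP]
    simp [norm_mul]
  -- center and radius identification
  have hcenter : EuclideanGeometry.inversion P r Q = midpoint ℝ P I := by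
    rw [hI, EuclideanGeometry.inversion, EuclideanGeometry.inversion, midpoint_eq_smul_add,
      hdQ, vsub_eq_sub, vadd_eq_add, vsub_eq_sub, vadd_eq_add, hQP]
    rw [Complex.real_smul, Complex.real_smul, Complex.real_smul]
    have hd' : (dist N P : ℂ) ≠ 0 := Complex.ofReal_ne_zero.mpr hd
    simp only [invOf_eq_inv]
    push_cast
    field_simp
    ring
  have hrad : r ^ 2 / dist Q P = dist P I / 2 := by
    rw [hdQ, hI, dist_comm P, EuclideanGeometry.dist_inversion_center]
    ring
  have hsph : Metric.sphere (EuclideanGeometry.inversion P r Q) (r ^ 2 / dist Q P) =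
      {Y : ℂ | dist Y (midpoint ℝ P I) = dist P I / 2} := by
    rw [hcenter, hrad]
    rfl
  calc (fun X => EuclideanGeometry.inversion P r X) '' (L : Set ℂ)
      = EuclideanGeometry.inversion P r '' (perpBisector P Q : Set ℂ) := by rw [hperp]
    _ = Metric.sphere (EuclideanGeometry.inversion P r Q) (r ^ 2 / dist Q P) \ {P} :=
        EuclideanGeometry.image_inversion_perpBisector hr.ne' hQneP
    _ = {Y : ℂ | dist Y (midpoint ℝ P I) = dist P I / 2} \ {P} := by rw [hsph]
end

section
/- Let O, A, B ∈ ℂ with A ≠ B and O not on line AB, let r > 0, let H be the orthogonal projection of O onto line AB (so H ≠ O), and let K = inversion O r H. Then the intersection of line AB with the circle of center O and radius r equals the intersection of that circle with the circle of diameter OK: {X ∈ ℂ : X ∈ line AB and |X − O| = r} = {X ∈ ℂ : |X − O| = r and dist(X, midpoint(O,K)) = dist(O,K)/2}. -/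
open EuclideanGeometry

open scoped RealInnerProductSpace

/-- For a line AB not through the center O of the circle Ω of radius r, with H
the foot of the perpendicular from O to AB and K the inversion of H in Ω, the
intersection of AB with Ω equals the intersection of Ω with the circle of
diameter OK. -/
theorem line_circle_inter_eq_circle_circle_inter (O A B : ℂ) (hAB : A ≠ B)
    (hO : O ∉ affineSpan ℝ ({A, B} : Set ℂ)) (r : ℝ) (hr : 0 < r)
    (H K : ℂ)
    (hH : H = EuclideanGeometry.orthogonalProjection (affineSpan ℝ ({A, B} : Set ℂ)) O)
    (hK : K = EuclideanGeometry.inversion O r H) :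
    {X : ℂ | X ∈ affineSpan ℝ ({A, B} : Set ℂ) ∧ ‖X - O‖ = r} =
      {X : ℂ | ‖X - O‖ = r ∧
        dist X (midpoint ℝ O K) = dist O K / 2} := by
  set s := affineSpan ℝ ({A, B} : Set ℂ) with hs
  have hHs : H ∈ s := by
    rw [hH]; exact (EuclideanGeometry.orthogonalProjection s O).2
  have hOH : O - H ≠ 0 := by
    intro h
    exact hO (by rwa [sub_eq_zero.mp h])
  have hOvsub : O - H ∈ s.directionᗮ := by
    have h1 := EuclideanGeometry.orthogonalProjection_vsub_mem_direction_orthogonal s O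
    rw [← hH] at h1
    have h2 := Submodule.neg_mem _ h1
    simpa [neg_sub] using h2
  -- direction of s equals the orthogonal complement of span (O - H)
  have hd1 : Module.finrank ℝ s.direction = 1 := by
    rw [hs, direction_affineSpan, vectorSpan_pair]
    exact finrank_span_singleton (sub_ne_zero.mpr hAB)
  have hle : s.direction ≤ (ℝ ∙ (O - H))ᗮ := by
    intro v hv
    rw [Submodule.mem_orthogonal_singleton_iff_inner_left]
    exact hOvsub v hv
  have horth1 : Module.finrank ℝ ((ℝ ∙ (O - H))ᗮ : Submodule ℝ ℂ) = 1 := by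
    have := Submodule.finrank_add_finrank_orthogonal (𝕜 := ℝ) (ℝ ∙ (O - H))
    rw [finrank_span_singleton hOH, Complex.finrank_real_complex] at this
    omega
  have heq : s.direction = (ℝ ∙ (O - H))ᗮ :=
    Submodule.eq_of_le_of_finrank_le hle (by rw [hd1, horth1])
  have hline : ∀ X : ℂ, X ∈ s ↔ ⟪O - H, X - H⟫ = 0 := by
    intro X
    constructor
    · intro hX
      rw [real_inner_comm]
      exact hOvsub (X - H) (AffineSubspace.vsub_mem_direction hX hHs)
    · intro hX
      have : X - H ∈ s.direction := by
        rw [heq, Submodule.mem_orthogonal_singleton_iff_inner_left, real_inner_comm]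
        exact hX
      have := AffineSubspace.vadd_mem_of_mem_direction this hHs
      simpa [sub_add_cancel] using this
  have hcirc : ∀ X : ℂ, dist X (midpoint ℝ O K) = dist O K / 2 ↔ ⟪X - O, X - K⟫ = 0 := by
    intro X
    have hmid : X - midpoint ℝ O K = ((X - O) + (X - K)) / 2 := by
      simp [midpoint_eq_smul_add, smul_eq_mul]; ring
    have hOK : O - K = (X - K) - (X - O) := by ring
    rw [dist_eq_norm, dist_eq_norm, hmid, hOK]
    have h2 : ‖((X - O) + (X - K)) / 2‖ = ‖(X - O) + (X - K)‖ / 2 := by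
      rw [show ((X - O) + (X - K)) / 2 = (2 : ℝ)⁻¹ • ((X - O) + (X - K)) by
        simp [smul_eq_mul]; ring]
      rw [norm_smul]; simp; ring
    rw [h2, div_eq_div_iff (by norm_num) (by norm_num)]
    rw [show (X - K) - (X - O) = -((X - O) - (X - K)) by ring, norm_neg]
    have hcancel : (‖X - O + (X - K)‖ * 2 = ‖X - O - (X - K)‖ * 2) ↔
        ‖X - O + (X - K)‖ = ‖X - O - (X - K)‖ := by
      constructor <;> intro h <;> linarith
    rw [hcancel, InnerProductGeometry.norm_add_eq_norm_sub_iff_angle_eq_pi_div_two,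
      ← InnerProductGeometry.inner_eq_zero_iff_angle_eq_pi_div_two]
  -- now the algebraic core
  have hcore : ∀ X : ℂ, ‖X - O‖ = r →
      (⟪O - H, X - H⟫ = 0 ↔ ⟪X - O, X - K⟫ = 0) := by
    intro X hX
    have hnorm : ‖X - O‖ = r := hX
    have hHO : H - O ≠ 0 := sub_ne_zero.mpr (Ne.symm (sub_ne_zero.mp hOH))
    have hn : ‖H - O‖ ≠ 0 := norm_ne_zero_iff.mpr hHO
    have hKX : X - K = (X - O) - ((r / ‖H - O‖) ^ 2) • (H - O) := by
      rw [hK, EuclideanGeometry.inversion, dist_eq_norm]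
      simp only [vadd_eq_add, vsub_eq_sub]
      rw [add_comm, sub_add_eq_sub_sub]
    have e1 : ⟪X - O, X - K⟫ = r ^ 2 - (r / ‖H - O‖) ^ 2 * ⟪X - O, H - O⟫ := by
      rw [hKX, inner_sub_right, real_inner_smul_right, real_inner_self_eq_norm_sq, hnorm]
    have e2 : ⟪O - H, X - H⟫ = ‖H - O‖ ^ 2 - ⟪X - O, H - O⟫ := by
      have ha : O - H = -(H - O) := by ring
      have hb : X - H = (X - O) - (H - O) := by ring
      rw [ha, hb, inner_neg_left, inner_sub_right, real_inner_self_eq_norm_sq,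
        real_inner_comm (H - O) (X - O)]
      ring
    rw [e1, e2]
    have hc : (r / ‖H - O‖) ^ 2 * ‖H - O‖ ^ 2 = r ^ 2 := by
      rw [div_pow, div_mul_cancel₀ _ (pow_ne_zero 2 hn)]
    have hcne : (r / ‖H - O‖) ^ 2 ≠ 0 := pow_ne_zero _ (div_ne_zero hr.ne' hn)
    constructor
    · intro h
      have ht : ⟪X - O, H - O⟫ = ‖H - O‖ ^ 2 := by linarith
      rw [ht, hc, sub_self]
    · intro h
      have h2 : (r / ‖H - O‖) ^ 2 * ⟪X - O, H - O⟫ =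
          (r / ‖H - O‖) ^ 2 * ‖H - O‖ ^ 2 := by linarith
      have ht := mul_left_cancel₀ hcne h2
      linarith
  ext X
  simp only [Set.mem_setOf_eq]
  constructor
  · rintro ⟨h1, h2⟩
    exact ⟨h2, (hcirc X).mpr ((hcore X h2).mp ((hline X).mp h1))⟩
  · rintro ⟨h1, h2⟩
    exact ⟨(hline X).mpr ((hcore X h1).mpr ((hcirc X).mp h2)), h1⟩
end

section
/- Let O, A ∈ ℂ with O ≠ A, let C ∈ ℂ with C not on line OA, set r = |C − O| (so r > 0), P = 2C − O, Q = 3C − 2O, let H be the orthogonal projection of Q onto line OA, and let I = inversion Q (2r) H. If X ∈ ℂ satisfies dist(X, midpoint(C,P)) = dist(C,P)/2 and dist(X, midpoint(Q,I)) = dist(Q,I)/2 (i.e. X lies on the circle with diameter CP and on the circle with diameter QI), then the point Y = inversion Q (2r) X lies on line OA and satisfies |Y − O| = r; that is, inverting the common points of these two circles in the circle of center Q and radius 2r yields intersection points of line OA with the circle of center O and radius r. -/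
open EuclideanGeometry

/-- Construction of the intersection of a line OA with the circle Ω of center O
through C in the case where the center O lies on the line: with r = |C − O|,
P = 2C − O, Q = 3C − 2O, H the foot of the perpendicular from Q to line OA and
I the inversion of H in the circle Λ of center Q and radius 2r, inverting any
common point X of the circles with diameters CP and QI in Λ yields a point of
line OA lying on Ω. -/
theorem line_through_center_circle_inter (O A C : ℂ) (hOA : O ≠ A)
    (hC : C ∉ affineSpan ℝ ({O, A} : Set ℂ))
    (r : ℝ) (hr : r = ‖C - O‖)
    (P Q : ℂ) (hP : P = 2 * C - O) (hQ : Q = 3 * C - 2 * O)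
    (H I : ℂ)
    (hH : H = EuclideanGeometry.orthogonalProjection (affineSpan ℝ ({O, A} : Set ℂ)) Q)
    (hI : I = EuclideanGeometry.inversion Q (2 * r) H)
    (X : ℂ)
    (hX₁ : dist X (midpoint ℝ C P) = dist C P / 2)
    (hX₂ : dist X (midpoint ℝ Q I) = dist Q I / 2)
    (Y : ℂ) (hY : Y = EuclideanGeometry.inversion Q (2 * r) X) :
    Y ∈ affineSpan ℝ ({O, A} : Set ℂ) ∧ ‖Y - O‖ = r := by
  set S := affineSpan ℝ ({O, A} : Set ℂ) with hS
  have hO : O ∈ S := mem_affineSpan ℝ (by simp)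
  have hA : A ∈ S := mem_affineSpan ℝ (by simp)
  have hCO : C ≠ O := fun h => hC (h ▸ hO)
  have hr0 : 0 < r := by rw [hr]; exact norm_pos_iff.2 (sub_ne_zero.2 hCO)
  have hQS : Q ∉ S := by
    intro hQmem
    apply hC
    have h1 := AffineSubspace.smul_vsub_vadd_mem S (1/3 : ℝ) hQmem hO hO
    have hCe : C = (1/3 : ℝ) • (Q -ᵥ O) +ᵥ O := by
      show C = ((1/3 : ℝ) : ℂ) * (Q - O) + O
      rw [hQ]; push_cast; ring
    rwa [← hCe] at h1
  have hH_mem : H ∈ S := by rw [hH]; exact EuclideanGeometry.orthogonalProjection_mem Q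
  have hQH : Q ≠ H := fun h => hQS (h ▸ hH_mem)
  -- midpoints
  have hmid : ∀ a b : ℂ, midpoint ℝ a b = (a + b) / 2 := by
    intro a b
    rw [midpoint_eq_smul_add, invOf_eq_inv]; push_cast [Complex.real_smul]; ring
  -- e1
  have hdCP : dist C P = r := by
    rw [Complex.dist_eq, hP, hr]
    rw [show C - (2*C - O) = -(C - O) by ring, norm_neg]
  have e1abs : ‖2*X - 3*C + O‖ = r := by
    have h2 : 2*X - 3*C + O = 2*(X - midpoint ℝ C P) := by rw [hmid, hP]; ring
    rw [h2, norm_mul, Complex.norm_two, ← Complex.dist_eq, hX₁, hdCP]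
    ring
  have hXQ : X ≠ Q := by
    intro h
    have h3 : ‖2*X - 3*C + O‖ = 3*r := by
      rw [h, hQ, show 2*(3*C-2*O) - 3*C + O = 3*(C-O) by ring, norm_mul, hr]
      norm_num
    rw [e1abs] at h3; linarith
  subst hQ
  set s : ℝ := Complex.normSq (X - (3*C - 2*O)) with hsdef
  set t : ℝ := Complex.normSq (H - (3*C - 2*O)) with htdef
  have hs : (s:ℂ) ≠ 0 :=
    Complex.ofReal_ne_zero.2 (by simpa [hsdef, Complex.normSq_eq_zero, sub_eq_zero] using hXQ)
  have ht : (t:ℂ) ≠ 0 :=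
    Complex.ofReal_ne_zero.2
      (by simpa [htdef, Complex.normSq_eq_zero, sub_eq_zero] using fun h => hQH h.symm)
  -- inversion equations
  have hinv : ∀ z w : ℂ, z ≠ w →
      ((Complex.normSq (z - w) : ℝ) : ℂ) * (EuclideanGeometry.inversion w (2*r) z - w)
        = 4*(r:ℂ)^2*(z - w) := by
    intro z w hzw
    rw [EuclideanGeometry.inversion]
    show ((Complex.normSq (z - w) : ℝ) : ℂ) * (((2*r)/dist z w)^2 • (z - w) + w - w) = _
    rw [Complex.dist_eq, div_pow, Complex.sq_norm, Complex.real_smul]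
    have hn : Complex.normSq (z - w) ≠ 0 := by
      simpa [Complex.normSq_eq_zero, sub_eq_zero] using hzw
    have hn' : ((Complex.normSq (z - w) : ℝ) : ℂ) ≠ 0 := Complex.ofReal_ne_zero.2 hn
    push_cast
    field_simp [hn']
    ring
  have h3 : (s:ℂ) * (Y - (3*C - 2*O)) = 4*(r:ℂ)^2*(X - (3*C - 2*O)) := by
    rw [hY]; exact hinv X _ hXQ
  have h4 : (t:ℂ) * (I - (3*C - 2*O)) = 4*(r:ℂ)^2*(H - (3*C - 2*O)) := by
    rw [hI]; exact hinv H _ (fun h => hQH h.symm)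
  have h3c := congrArg (starRingEnd ℂ) h3
  have h4c := congrArg (starRingEnd ℂ) h4
  simp only [map_mul, map_sub, map_add, map_ofNat, map_pow, Complex.conj_ofReal] at h3c h4c
  have h1s : (s:ℂ) = (X - (3*C - 2*O)) * ((starRingEnd ℂ) X - (3*(starRingEnd ℂ) C - 2*(starRingEnd ℂ) O)) := by
    rw [hsdef]
    push_cast [← Complex.mul_conj]
    simp only [map_sub, map_mul, map_ofNat]
  have h2t : (t:ℂ) = (H - (3*C - 2*O)) * ((starRingEnd ℂ) H - (3*(starRingEnd ℂ) C - 2*(starRingEnd ℂ) O)) := by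
    rw [htdef]
    push_cast [← Complex.mul_conj]
    simp only [map_sub, map_mul, map_ofNat]
  have h5 : (C - O) * ((starRingEnd ℂ) C - (starRingEnd ℂ) O) = (r:ℂ)^2 := by
    rw [← map_sub, Complex.mul_conj, hr]
    push_cast [← Complex.sq_norm]
    ring
  have h6 : (2*X - 3*C + O) * (2*(starRingEnd ℂ) X - 3*(starRingEnd ℂ) C + (starRingEnd ℂ) O)
      = (r:ℂ)^2 := by
    have := e1abs
    rw [show (2*(starRingEnd ℂ) X - 3*(starRingEnd ℂ) C + (starRingEnd ℂ) O)
        = (starRingEnd ℂ) (2*X - 3*C + O) by simp only [map_sub, map_add, map_mul, map_ofNat]]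
    rw [Complex.mul_conj]
    rw [← Complex.sq_norm, e1abs]
    push_cast; ring
  -- h7 from hX₂
  have e2abs : ‖2*X - (3*C - 2*O) - I‖ = ‖(3*C - 2*O) - I‖ := by
    have h2 : 2*X - (3*C - 2*O) - I = 2*(X - midpoint ℝ (3*C - 2*O) I) := by rw [hmid]; ring
    rw [h2, norm_mul, Complex.norm_two, ← Complex.dist_eq, hX₂, Complex.dist_eq]
    ring
  have h7 : (2*X - (3*C - 2*O) - I) *
        (2*(starRingEnd ℂ) X - (3*(starRingEnd ℂ) C - 2*(starRingEnd ℂ) O) - (starRingEnd ℂ) I)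
      = ((3*C - 2*O) - I) * ((3*(starRingEnd ℂ) C - 2*(starRingEnd ℂ) O) - (starRingEnd ℂ) I) := by
    rw [show (2*(starRingEnd ℂ) X - (3*(starRingEnd ℂ) C - 2*(starRingEnd ℂ) O) - (starRingEnd ℂ) I)
        = (starRingEnd ℂ) (2*X - (3*C - 2*O) - I) by simp only [map_sub, map_add, map_mul, map_ofNat],
      show (3*(starRingEnd ℂ) C - 2*(starRingEnd ℂ) O) - (starRingEnd ℂ) I
        = (starRingEnd ℂ) ((3*C - 2*O) - I) by simp only [map_sub, map_add, map_mul, map_ofNat]]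
    rw [Complex.mul_conj, Complex.mul_conj]
    congr 1
    rw [← Complex.sq_norm, ← Complex.sq_norm ((3*C - 2*O) - I), e2abs]
  -- Part 1 : |Y - O| = r
  have key1 : (Y - O) * ((starRingEnd ℂ) Y - (starRingEnd ℂ) O) * (s:ℂ)^2 = (r:ℂ)^2 * (s:ℂ)^2 := by
    linear_combination
      ((s:ℂ)*((starRingEnd ℂ) Y - (3*(starRingEnd ℂ) C - 2*(starRingEnd ℂ) O))
        + 3*(s:ℂ)*((starRingEnd ℂ) C - (starRingEnd ℂ) O)) * h3
      + (4*(r:ℂ)^2*(X - (3*C - 2*O)) + 3*(s:ℂ)*(C - O)) * h3c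
      + (8*(r:ℂ)^2*(s:ℂ) - 16*(r:ℂ)^4) * h1s
      + (9*(s:ℂ)^2 - 18*(r:ℂ)^2*(s:ℂ)) * h5
      + 2*(r:ℂ)^2*(s:ℂ) * h6
  have habsY : ‖Y - O‖ = r := by
    have hYO : (Y - O) * (starRingEnd ℂ) (Y - O) = (r:ℂ)^2 := by
      have := mul_right_cancel₀ (pow_ne_zero 2 hs) key1
      rw [map_sub]; exact this
    rw [Complex.mul_conj] at hYO
    have : Complex.normSq (Y - O) = r^2 := by exact_mod_cast hYO
    have h2 := Complex.sq_norm (Y - O)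
    nlinarith [norm_nonneg (Y - O)]
  -- Part 2 : Y ∈ line
  have key2 : ((s:ℂ)*(t:ℂ)) *
      (2*(H - (3*C - 2*O))*((starRingEnd ℂ) H - (3*(starRingEnd ℂ) C - 2*(starRingEnd ℂ) O))
        - (H - (3*C - 2*O))*((starRingEnd ℂ) Y - (3*(starRingEnd ℂ) C - 2*(starRingEnd ℂ) O))
        - ((starRingEnd ℂ) H - (3*(starRingEnd ℂ) C - 2*(starRingEnd ℂ) O))*(Y - (3*C - 2*O))) = 0 := by
    linear_combination
      (-(H - (3*C - 2*O))*(t:ℂ)) * h3c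
      + (-((starRingEnd ℂ) H - (3*(starRingEnd ℂ) C - 2*(starRingEnd ℂ) O))*(t:ℂ)) * h3
      + (((starRingEnd ℂ) X - (3*(starRingEnd ℂ) C - 2*(starRingEnd ℂ) O))*(t:ℂ)) * h4
      + ((X - (3*C - 2*O))*(t:ℂ)) * h4c
      + ((t:ℂ)^2/2) * h7
      - 2*(t:ℂ)*(s:ℂ) * h2t
      + 2*(t:ℂ)^2 * h1s
  have key2' : (starRingEnd ℂ) ((3*C - 2*O) - H) * (Y - H)
      + (starRingEnd ℂ) ((starRingEnd ℂ) ((3*C - 2*O) - H) * (Y - H)) = 0 := by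
    have h0 := mul_left_cancel₀ (mul_ne_zero hs ht) (key2.trans (mul_zero _).symm)
    simp only [map_mul, map_sub, map_add, map_ofNat, Complex.conj_conj]
    linear_combination h0
  have hinner : (inner ℝ ((3*C - 2*O) - H) (Y - H) : ℝ) = 0 := by
    rw [Complex.inner]
    have := Complex.add_conj ((starRingEnd ℂ) ((3*C - 2*O) - H) * (Y - H))
    rw [key2'] at this
    have h00 : (2 * ((starRingEnd ℂ) ((3*C - 2*O) - H) * (Y - H)).re : ℝ) = 0 := by
      exact_mod_cast this.symm
    rw [mul_comm (Y - H)]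
    linarith
  -- direction machinery
  have hdir : S.direction = ℝ ∙ (O - A) := by
    rw [hS, direction_affineSpan, vectorSpan_pair, vsub_eq_sub]
  have hQHperp : (3*C - 2*O) - H ∈ (ℝ ∙ (O - A))ᗮ := by
    rw [← hdir]
    have h9 := EuclideanGeometry.vsub_orthogonalProjection_mem_direction_orthogonal S (3*C - 2*O)
    rwa [← hH] at h9
  have hQH0 : (3*C - 2*O) - H ≠ 0 := sub_ne_zero.2 hQH
  have hle : (ℝ ∙ (O - A)) ≤ (ℝ ∙ ((3*C - 2*O) - H))ᗮ := by
    rw [Submodule.span_singleton_le_iff_mem, Submodule.mem_orthogonal_singleton_iff_inner_right]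
    rw [real_inner_comm]
    exact Submodule.mem_orthogonal_singleton_iff_inner_right.1 hQHperp
  have heq : (ℝ ∙ (O - A)) = (ℝ ∙ ((3*C - 2*O) - H))ᗮ := by
    apply Submodule.eq_of_le_of_finrank_eq hle
    have h2 := Submodule.finrank_add_finrank_orthogonal (K := (ℝ ∙ ((3*C - 2*O) - H)))
    rw [finrank_span_singleton hQH0, Complex.finrank_real_complex] at h2
    rw [finrank_span_singleton (sub_ne_zero.2 hOA)]
    omega
  have hYdir : Y - H ∈ S.direction := by
    rw [hdir, heq, Submodule.mem_orthogonal_singleton_iff_inner_right]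
    exact hinner
  constructor
  · have h8 := AffineSubspace.vadd_mem_of_mem_direction hYdir hH_mem
    simpa using h8
  · exact habsY
end

section
/- (Mohr–Mascheroni) Every point constructable with ruler and compass is constructable with compass alone: ℛ = 𝔠. -/
open Complex

lemma abs_eq_abs_iff_normSq {x y : ℂ} : ‖x‖ = ‖y‖ ↔ normSq x = normSq y := by
  constructor
  · intro h; rw [← Complex.sq_norm, ← Complex.sq_norm, h]
  · intro h; rw [Complex.norm_def, Complex.norm_def, h]

lemma abs_eq_of_normSq {x : ℂ} {r : ℝ} (hr : 0 ≤ r) (h : normSq x = r ^ 2) :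
    ‖x‖ = r := by
  rw [Complex.norm_def, h, Real.sqrt_sq hr]

lemma normSq_eq_of_abs_eq {x : ℂ} {r : ℝ} (h : ‖x‖ = r) : normSq x = r ^ 2 := by
  rw [← Complex.sq_norm, h]

/-- Two circles with distinct centers are distinct as sets. -/
lemma circles_ne (a b c d : ℂ) (hac : a ≠ c) :
    {w : ℂ | ‖w - a‖ = ‖b - a‖} ≠
      {w : ℂ | ‖w - c‖ = ‖d - c‖} := by
  intro h
  apply hac
  have key : ∀ w : ℂ, ‖w - a‖ = ‖b - a‖ ↔
      ‖w - c‖ = ‖d - c‖ := fun w => Set.ext_iff.mp h w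
  set r1 : ℝ := ‖b - a‖ with hr1
  set r2 : ℝ := ‖d - c‖ with hr2
  have hr1n : (0:ℝ) ≤ r1 := norm_nonneg _
  have hr2n : (0:ℝ) ≤ r2 := norm_nonneg _
  have habs : ∀ s : ℝ, 0 ≤ s → ∀ w : ℂ, ‖(w + s) - w‖ = s := by
    intro s hs w
    simp [Complex.norm_real, _root_.abs_of_nonneg hs]
  have habs' : ∀ s : ℝ, 0 ≤ s → ∀ w : ℂ, ‖(w - s) - w‖ = s := by
    intro s hs w
    have : (w - (s:ℂ)) - w = -(s:ℂ) := by ring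
    rw [this]
    simp [Complex.norm_real, _root_.abs_of_nonneg hs]
  have hE0 : normSq ((a + r1) - c) = r2 ^ 2 :=
    normSq_eq_of_abs_eq ((key _).mp (habs r1 hr1n a))
  have hE1 : normSq ((a - r1) - c) = r2 ^ 2 :=
    normSq_eq_of_abs_eq ((key _).mp (habs' r1 hr1n a))
  have hF0 : normSq ((c + r2) - a) = r1 ^ 2 :=
    normSq_eq_of_abs_eq ((key _).mpr (habs r2 hr2n c))
  have hF1 : normSq ((c - r2) - a) = r1 ^ 2 :=
    normSq_eq_of_abs_eq ((key _).mpr (habs' r2 hr2n c))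
  simp only [Complex.normSq_apply, Complex.add_re, Complex.add_im, Complex.sub_re,
    Complex.sub_im, Complex.ofReal_re, Complex.ofReal_im] at hE0 hE1 hF0 hF1
  apply Complex.ext
  · nlinarith [sq_nonneg (a.re - c.re), sq_nonneg (a.im - c.im)]
  · nlinarith [sq_nonneg (a.re - c.re), sq_nonneg (a.im - c.im)]




/-- The set ℛ of ruler-and-compass constructable points in the plane ℂ: the
smallest set containing 0 and 1 and closed under intersecting two distinct
lines through constructable points, intersecting such a line with a circle
whose center and a point of which are constructable, and intersecting two
distinct circles whose centers and radius-defining points are constructable. -/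
inductive RulerCompass : ℂ → Prop
  | zero : RulerCompass 0
  | one : RulerCompass 1
  | line_line (A B C D z : ℂ) :
      RulerCompass A → RulerCompass B → RulerCompass C → RulerCompass D →
      A ≠ B → C ≠ D →
      affineSpan ℝ ({A, B} : Set ℂ) ≠ affineSpan ℝ ({C, D} : Set ℂ) →
      z ∈ affineSpan ℝ ({A, B} : Set ℂ) →
      z ∈ affineSpan ℝ ({C, D} : Set ℂ) →
      RulerCompass z
  | line_circle (A B C D z : ℂ) :
      RulerCompass A → RulerCompass B → RulerCompass C → RulerCompass D →
      A ≠ B →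
      z ∈ affineSpan ℝ ({A, B} : Set ℂ) →
      ‖z - C‖ = ‖D - C‖ →
      RulerCompass z
  | circle_circle (a b c d z : ℂ) :
      RulerCompass a → RulerCompass b → RulerCompass c → RulerCompass d →
      ‖z - a‖ = ‖b - a‖ →
      ‖z - c‖ = ‖d - c‖ →
      {w : ℂ | ‖w - a‖ = ‖b - a‖} ≠
        {w : ℂ | ‖w - c‖ = ‖d - c‖} →
      RulerCompass z

namespace Compass

/-- Intersection of two circles with distinct constructable centers. -/
lemma cc {a b c d w : ℂ} (ha : Compass a) (hb : Compass b) (hc : Compass c)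
    (hd : Compass d) (hac : a ≠ c)
    (h1 : ‖w - a‖ = ‖b - a‖)
    (h2 : ‖w - c‖ = ‖d - c‖) : Compass w :=
  Compass.circle_circle a b c d w ha hb hc hd h1 h2 (circles_ne a b c d hac)

/-- Point reflection: `2c - w` is constructable from `c` and `w`. -/
lemma point_reflect {c w : ℂ} (hc : Compass c) (hw : Compass w) : Compass (2 * c - w) := by
  rcases eq_or_ne w c with rfl | hwc
  · have : 2 * w - w = w := by ring
    rw [this]; exact hw
  have hcw : c ≠ w := hwc.symm
  set ω : ℂ := ⟨1/2, Real.sqrt 3 / 2⟩ with hω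
  have h3 : Real.sqrt 3 ^ 2 = 3 := Real.sq_sqrt (by norm_num)
  have habs1 : ∀ μ : ℂ, normSq μ = 1 → ∀ x : ℂ, ‖x * μ‖ = ‖x‖ := by
    intro μ hμ x
    rw [norm_mul]
    have : ‖μ‖ = 1 := abs_eq_of_normSq (by norm_num) (by simpa using hμ)
    rw [this, mul_one]
  have hnω : normSq ω = 1 := by
    simp only [Complex.normSq_mk, hω]
    nlinarith
  have hnω1 : normSq (ω - 1) = 1 := by
    simp only [Complex.normSq_apply, Complex.sub_re, Complex.sub_im, Complex.one_re,
      Complex.one_im, hω]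
    nlinarith
  set p1 : ℂ := c + (w - c) * ω with hp1
  set p2 : ℂ := c + (w - c) * (ω - 1) with hp2
  have hwc0 : w - c ≠ 0 := sub_ne_zero.mpr hwc
  have hω0 : ω ≠ 0 := by
    intro h
    rw [h] at hnω
    simp at hnω
  have hω10 : ω - 1 ≠ 0 := by
    intro h
    rw [h] at hnω1
    simp at hnω1
  -- p1 is constructable
  have hP1 : Compass p1 := by
    apply cc hc hw hw hc hcw
    · rw [show p1 - c = (w - c) * ω by rw [hp1]; ring, habs1 ω hnω]
    · rw [show p1 - w = (w - c) * (ω - 1) by rw [hp1]; ring, habs1 (ω - 1) hnω1,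
        show c - w = -(w - c) by ring, norm_neg]
  have hp1c : p1 ≠ c := by
    rw [hp1]
    intro h
    exact (mul_ne_zero hwc0 hω0) (by linear_combination h)
  -- p2 is constructable
  have hP2 : Compass p2 := by
    apply cc hc hw hP1 hc hp1c.symm
    · rw [show p2 - c = (w - c) * (ω - 1) by rw [hp2]; ring, habs1 (ω - 1) hnω1]
    · rw [show p2 - p1 = (w - c) * (-1) by rw [hp1, hp2]; ring,
        show c - p1 = (w - c) * (-ω) by rw [hp1]; ring,
        habs1 (-1) (by simp), habs1 (-ω) (by rw [normSq_neg]; exact hnω)]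
  have hp2c : p2 ≠ c := by
    rw [hp2]
    intro h
    exact (mul_ne_zero hwc0 hω10) (by linear_combination h)
  -- the reflected point
  have key : Compass (2 * c - w) := by
    apply cc hc hw hP2 hc hp2c.symm
    · rw [show 2 * c - w - c = (w - c) * (-1) by ring, habs1 (-1) (by simp),
        show w - c = (w - c) * 1 by ring, habs1 1 (by simp)]
    · rw [show 2 * c - w - p2 = (w - c) * (-ω) by rw [hp2]; ring,
        show c - p2 = (w - c) * (-(ω - 1)) by rw [hp2]; ring,
        habs1 (-ω) (by rw [normSq_neg]; exact hnω),
        habs1 (-(ω - 1)) (by rw [normSq_neg]; exact hnω1)]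
  exact key

/-- Conjugation (reflection in the real axis). -/
lemma conj {z : ℂ} (hz : Compass z) : Compass (starRingEnd ℂ z) := by
  apply cc Compass.zero hz Compass.one hz (by norm_num)
  · rw [sub_zero, sub_zero, ← Complex.norm_conj z]
  · rw [show (starRingEnd ℂ) z - 1 = (starRingEnd ℂ) (z - 1) by rw [map_sub, map_one],
      Complex.norm_conj]

/-- The midpoint of two constructable points is constructable. -/
lemma mid {a b : ℂ} (ha : Compass a) (hb : Compass b) : Compass ((a + b) / 2) := by
  rcases eq_or_ne a b with rfl | hab
  · have : (a + a) / 2 = a := by ring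
    rw [this]; exact ha
  have hba : b ≠ a := hab.symm
  have hba0 : b - a ≠ 0 := sub_ne_zero.mpr hba
  have h15 : Real.sqrt 15 ^ 2 = 15 := Real.sq_sqrt (by norm_num)
  have h15pos : 0 < Real.sqrt 15 := Real.sqrt_pos.mpr (by norm_num)
  set μ : ℂ := ⟨1/4, Real.sqrt 15 / 4⟩ with hμ
  have habs1 : ∀ (ν : ℂ) (s : ℝ), 0 ≤ s → normSq ν = s ^ 2 →
      ∀ x : ℂ, ‖x * ν‖ = s * ‖x‖ := by
    intro ν s hs hν x
    rw [norm_mul, abs_eq_of_normSq hs hν, mul_comm]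
  have hnμ : normSq μ = 1 ^ 2 := by
    simp only [Complex.normSq_mk, hμ]
    nlinarith
  have hnμ2 : normSq (μ - 2) = 2 ^ 2 := by
    simp only [Complex.normSq_apply, Complex.sub_re, Complex.sub_im, hμ]
    norm_num
    nlinarith
  have hnμh : normSq ((1:ℂ)/2 - μ) = 1 ^ 2 := by
    simp only [Complex.normSq_apply, Complex.sub_re, Complex.sub_im, Complex.div_re,
      Complex.div_im, Complex.one_re, Complex.one_im, hμ]
    norm_num
    nlinarith
  set μ' : ℂ := ⟨1/4, -(Real.sqrt 15 / 4)⟩ with hμ'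
  have hnμ' : normSq μ' = 1 ^ 2 := by
    simp only [Complex.normSq_mk, hμ']
    nlinarith
  have hnμ2' : normSq (μ' - 2) = 2 ^ 2 := by
    simp only [Complex.normSq_apply, Complex.sub_re, Complex.sub_im, hμ']
    norm_num
    nlinarith
  have hnμh' : normSq ((1:ℂ)/2 - μ') = 1 ^ 2 := by
    simp only [Complex.normSq_apply, Complex.sub_re, Complex.sub_im, Complex.div_re,
      Complex.div_im, Complex.one_re, Complex.one_im, hμ']
    norm_num
    nlinarith
  -- b' = 2b - a
  have hB' : Compass (2 * b - a) := point_reflect hb ha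
  set b' : ℂ := 2 * b - a with hb'
  have hb'a : b' ≠ a := by
    rw [hb']
    intro h
    exact hba0 (by linear_combination h / 2)
  set P : ℂ := a + (b - a) * μ with hP
  set Q : ℂ := a + (b - a) * μ' with hQ
  have hPc : Compass P := by
    apply cc ha hb hB' ha hb'a.symm
    · rw [show P - a = (b - a) * μ by rw [hP]; ring, habs1 μ 1 (by norm_num) hnμ, one_mul]
    · rw [show P - b' = (b - a) * (μ - 2) by rw [hP, hb']; ring,
        show a - b' = (b - a) * (-2) by rw [hb']; ring,
        habs1 (μ - 2) 2 (by norm_num) hnμ2, habs1 (-2) 2 (by norm_num) (by norm_num [Complex.normSq_apply])]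
  have hQc : Compass Q := by
    apply cc ha hb hB' ha hb'a.symm
    · rw [show Q - a = (b - a) * μ' by rw [hQ]; ring, habs1 μ' 1 (by norm_num) hnμ', one_mul]
    · rw [show Q - b' = (b - a) * (μ' - 2) by rw [hQ, hb']; ring,
        show a - b' = (b - a) * (-2) by rw [hb']; ring,
        habs1 (μ' - 2) 2 (by norm_num) hnμ2', habs1 (-2) 2 (by norm_num) (by norm_num [Complex.normSq_apply])]
  have hPQ : P ≠ Q := by
    rw [hP, hQ]
    intro h
    have h2 : (b - a) * (μ - μ') = 0 := by linear_combination h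
    rcases mul_eq_zero.mp h2 with h3 | h3
    · exact hba0 h3
    · have : μ - μ' = ⟨0, Real.sqrt 15 / 2⟩ := by
        rw [hμ, hμ']
        apply Complex.ext <;> simp <;> ring
      rw [this] at h3
      have := congrArg Complex.im h3
      simp at this
      try linarith
  apply cc hPc ha hQc ha hPQ
  · rw [show (a + b) / 2 - P = (b - a) * ((1:ℂ)/2 - μ) by rw [hP]; ring,
      show a - P = (b - a) * (-μ) by rw [hP]; ring,
      habs1 ((1:ℂ)/2 - μ) 1 (by norm_num) hnμh,
      habs1 (-μ) 1 (by norm_num) (by rw [normSq_neg]; exact hnμ)]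
  · rw [show (a + b) / 2 - Q = (b - a) * ((1:ℂ)/2 - μ') by rw [hQ]; ring,
      show a - Q = (b - a) * (-μ') by rw [hQ]; ring,
      habs1 ((1:ℂ)/2 - μ') 1 (by norm_num) hnμh',
      habs1 (-μ') 1 (by norm_num) (by rw [normSq_neg]; exact hnμ')]

/-- Negation. -/
lemma neg {z : ℂ} (hz : Compass z) : Compass (-z) := by
  have := point_reflect Compass.zero hz
  simpa using this

/-- Addition. -/
lemma add {x y : ℂ} (hx : Compass x) (hy : Compass y) : Compass (x + y) := by
  have hm := mid hx hy
  have := point_reflect hm Compass.zero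
  have h2 : 2 * ((x + y) / 2) - 0 = x + y := by ring
  rwa [h2] at this

/-- Subtraction. -/
lemma sub {x y : ℂ} (hx : Compass x) (hy : Compass y) : Compass (x - y) := by
  have := add hx (neg hy)
  simpa [sub_eq_add_neg] using this

/-- Halving. -/
lemma half {z : ℂ} (hz : Compass z) : Compass (z / 2) := by
  have := mid hz Compass.zero
  simpa using this

/-- Doubling powers. -/
lemma two_pow_mul {z : ℂ} (hz : Compass z) (k : ℕ) : Compass ((2 ^ k : ℂ) * z) := by
  induction k with
  | zero => simpa using hz
  | succ n ih =>
      have := add ih ih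
      have h2 : (2 ^ n : ℂ) * z + (2 ^ n : ℂ) * z = (2 ^ (n+1) : ℂ) * z := by ring
      rwa [h2] at this

/-- Inversion in the unit circle (for points of modulus at least 1). -/
lemma inv_big {u : ℂ} (hu : Compass u) (hR : 1 ≤ ‖u‖) :
    Compass (u / (normSq u : ℂ)) := by
  set R : ℝ := ‖u‖ with hRdef
  have hR0 : (0:ℝ) < R := lt_of_lt_of_le one_pos hR
  have hu0 : u ≠ 0 := by
    intro h
    rw [h] at hRdef
    simp at hRdef
    rw [hRdef] at hR0
    exact lt_irrefl _ hR0
  clear_value R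
  set x : ℝ := 1/(2*R) with hx
  have hx0 : 0 < x := by positivity
  have hxh : x ≤ 1/2 := by
    rw [hx, div_le_div_iff₀ (by linarith) (by norm_num)]
    linarith
  have h2Rx : 2 * R * x = 1 := by
    rw [hx]
    field_simp
  clear_value x
  set y : ℝ := Real.sqrt (1 - x^2) with hy
  have hy2 : y ^ 2 = 1 - x ^ 2 := Real.sq_sqrt (by nlinarith)
  have hy0 : 0 < y := Real.sqrt_pos.mpr (by nlinarith)
  clear_value y
  have hxy : x ^ 2 + y ^ 2 = 1 := by nlinarith
  set p1 : ℝ := x / R with hp1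
  set q1 : ℝ := y / R with hq1
  have hq10 : 0 < q1 := by positivity
  have hpq : p1 ^ 2 + q1 ^ 2 = (1/R) ^ 2 := by
    rw [hp1, hq1]
    field_simp
    linear_combination hxy
  set t : ℝ := 1/R^2 with ht
  -- key absolute value computation
  have habsU : ∀ a b s : ℝ, 0 ≤ s → a^2 + b^2 = s^2 →
      ‖u * ((a:ℂ) + (b:ℂ) * I)‖ = R * s := by
    intro a b s hs hab
    rw [norm_mul, ← hRdef, Complex.norm_add_mul_I]
    rw [show Real.sqrt (a^2 + b^2) = s by rw [hab, Real.sqrt_sq hs]]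
  set P : ℂ := u * ((p1:ℂ) + (q1:ℂ) * I) with hP
  set Q : ℂ := u * (((p1:ℝ):ℂ) + ((-q1:ℝ):ℂ) * I) with hQ
  have habs_P0 : ‖P - 0‖ = ‖(1:ℂ) - 0‖ := by
    rw [show P - 0 = u * ((p1:ℂ) + (q1:ℂ) * I) by rw [hP]; ring,
      habsU p1 q1 (1/R) (by positivity) hpq]
    field_simp
    simp
  have habs_Pu : ‖P - u‖ = ‖0 - u‖ := by
    rw [show P - u = u * (((p1 - 1 : ℝ):ℂ) + (q1:ℂ) * I) by rw [hP]; push_cast; ring,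
      show (0:ℂ) - u = u * (((-1 : ℝ):ℂ) + ((0:ℝ):ℂ) * I) by push_cast; ring,
      habsU (p1 - 1) q1 1 (by norm_num) (by rw [hp1, hq1]; field_simp; linear_combination hxy - h2Rx),
      habsU (-1) 0 1 (by norm_num) (by norm_num)]
  have habs_Q0 : ‖Q - 0‖ = ‖(1:ℂ) - 0‖ := by
    rw [show Q - 0 = u * (((p1:ℝ):ℂ) + ((-q1:ℝ):ℂ) * I) by rw [hQ]; ring,
      habsU p1 (-q1) (1/R) (by positivity) (by linear_combination hpq)]
    field_simp
    simp
  have habs_Qu : ‖Q - u‖ = ‖0 - u‖ := by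
    rw [show Q - u = u * (((p1 - 1 : ℝ):ℂ) + ((-q1:ℝ):ℂ) * I) by rw [hQ]; push_cast; ring,
      show (0:ℂ) - u = u * (((-1 : ℝ):ℂ) + ((0:ℝ):ℂ) * I) by push_cast; ring,
      habsU (p1 - 1) (-q1) 1 (by norm_num) (by rw [hp1, hq1]; field_simp; linear_combination hxy - h2Rx),
      habsU (-1) 0 1 (by norm_num) (by norm_num)]
  have hPc : Compass P := cc hu Compass.zero Compass.zero Compass.one hu0 habs_Pu habs_P0
  have hQc : Compass Q := cc hu Compass.zero Compass.zero Compass.one hu0 habs_Qu habs_Q0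
  have hPQ : P ≠ Q := by
    rw [hP, hQ]
    intro h
    have h2 : u * (((2*q1 : ℝ):ℂ) * I) = 0 := by push_cast at h ⊢; linear_combination h
    rcases mul_eq_zero.mp h2 with h3 | h3
    · exact hu0 h3
    · rcases mul_eq_zero.mp h3 with h4 | h4
      · rw [Complex.ofReal_eq_zero] at h4
        linarith
      · exact Complex.I_ne_zero h4
  -- the inverse point
  have hX : Compass (u * ((t:ℝ):ℂ)) := by
    apply cc hPc Compass.zero hQc Compass.zero hPQ
    · rw [show u * ((t:ℝ):ℂ) - P = u * (((t - p1 : ℝ):ℂ) + ((-q1 : ℝ):ℂ) * I) by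
          rw [hP]; push_cast; ring,
        show (0:ℂ) - P = u * (((-p1 : ℝ):ℂ) + ((-q1 : ℝ):ℂ) * I) by rw [hP]; push_cast; ring,
        habsU (t - p1) (-q1) (1/R) (by positivity) (by
          rw [ht, hp1, hq1]; field_simp; linear_combination (-1:ℝ) * h2Rx + R^2 * hxy),
        habsU (-p1) (-q1) (1/R) (by positivity) (by linear_combination hpq)]
    · rw [show u * ((t:ℝ):ℂ) - Q = u * (((t - p1 : ℝ):ℂ) + ((q1 : ℝ):ℂ) * I) by
          rw [hQ]; push_cast; ring,
        show (0:ℂ) - Q = u * (((-p1 : ℝ):ℂ) + ((q1 : ℝ):ℂ) * I) by rw [hQ]; push_cast; ring,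
        habsU (t - p1) q1 (1/R) (by positivity) (by
          rw [ht, hp1, hq1]; field_simp; linear_combination (-1:ℝ) * h2Rx + R^2 * hxy),
        habsU (-p1) q1 (1/R) (by positivity) (by linear_combination hpq)]
  have hns : (normSq u : ℂ) = ((R^2 : ℝ) : ℂ) := by
    rw [← Complex.sq_norm, ← hRdef]
  rw [hns, show u / ((R^2 : ℝ):ℂ) = u * ((t:ℝ):ℂ) by
    rw [ht]; push_cast; field_simp]
  exact hX

/-- Inverses. -/
lemma inv {z : ℂ} (hz : Compass z) : Compass z⁻¹ := by
  rcases eq_or_ne z 0 with rfl | hz0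
  · simpa using Compass.zero
  have habs0 : 0 < ‖z‖ := by
    simpa [norm_pos_iff] using hz0
  obtain ⟨k, hk⟩ := pow_unbounded_of_one_lt ((‖z‖)⁻¹) (by norm_num : (1:ℝ) < 2)
  set u : ℂ := (2 ^ k : ℂ) * z with hu
  have hu0 : u ≠ 0 := mul_ne_zero (pow_ne_zero _ two_ne_zero) hz0
  have habsu : 1 ≤ ‖u‖ := by
    rw [hu, norm_mul]
    have h2k : ‖(2:ℂ) ^ k‖ = 2 ^ k := by
      rw [norm_pow]
      norm_num
    rw [h2k]
    rw [inv_lt_iff_one_lt_mul₀ habs0] at hk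
    nlinarith
  have huc : Compass u := two_pow_mul hz k
  have hbig := inv_big huc habsu
  have hconj := conj hbig
  have hinvu : Compass u⁻¹ := by
    have heq : (starRingEnd ℂ) (u / (normSq u : ℂ)) = u⁻¹ := by
      rw [map_div₀, Complex.conj_ofReal, Complex.inv_def]
      field_simp
      push_cast; ring
    rwa [heq] at hconj
  have := two_pow_mul hinvu k
  have heq2 : (2 ^ k : ℂ) * u⁻¹ = z⁻¹ := by
    rw [hu, mul_inv, ← mul_assoc, mul_inv_cancel₀ (pow_ne_zero _ (two_ne_zero : (2:ℂ) ≠ 0)),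
      one_mul]
  rwa [heq2] at this

/-- Squares. -/
lemma sq {z : ℂ} (hz : Compass z) : Compass (z ^ 2) := by
  rcases eq_or_ne z 0 with rfl | h0
  · simpa using Compass.zero
  rcases eq_or_ne z 1 with rfl | h1
  · simpa using Compass.one
  have ha : Compass (z - 1)⁻¹ := inv (sub hz Compass.one)
  have hb : Compass z⁻¹ := inv hz
  have hc : Compass ((z-1)⁻¹ - z⁻¹) := sub ha hb
  have hkey : (z-1)⁻¹ - z⁻¹ = (z^2 - z)⁻¹ := by
    have hz1 : z - 1 ≠ 0 := sub_ne_zero.mpr h1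
    rw [show z^2 - z = z * (z - 1) by ring, mul_inv]
    field_simp
    ring
  rw [hkey] at hc
  have hd : Compass (z^2 - z) := by
    have := inv hc
    rwa [inv_inv] at this
  have := add hd hz
  have he : z^2 - z + z = z^2 := by ring
  rwa [he] at this

/-- Products. -/
lemma mul {x y : ℂ} (hx : Compass x) (hy : Compass y) : Compass (x * y) := by
  have h1 : Compass ((x + y)^2) := sq (add hx hy)
  have h2 : Compass ((x+y)^2 - x^2) := sub h1 (sq hx)
  have h3 : Compass ((x+y)^2 - x^2 - y^2) := sub h2 (sq hy)
  have h4 := half h3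
  have : ((x+y)^2 - x^2 - y^2) / 2 = x * y := by ring
  rwa [this] at h4

/-- abs of `a + b*I`. -/
lemma habs2 (a b s : ℝ) (hs : 0 ≤ s) (h : a^2 + b^2 = s^2) :
    ‖(a:ℂ) + (b:ℂ) * I‖ = s := by
  rw [Complex.norm_add_mul_I, h, Real.sqrt_sq hs]

/-- `√r * I` is constructable when `r` is a constructable nonnegative real, `r ≠ 1`. -/
lemma sqrt_mul_I {r : ℝ} (hr : Compass ((r:ℝ):ℂ)) (h0 : 0 ≤ r) (h1 : r ≠ 1) :
    Compass ((Real.sqrt r : ℂ) * I) := by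
  have hsq : Real.sqrt r ^ 2 = r := Real.sq_sqrt h0
  have hsn : 0 ≤ Real.sqrt r := Real.sqrt_nonneg r
  set c1 : ℂ := (((r-1)/2 : ℝ) : ℂ) with hc1
  set c2 : ℂ := (((1-r)/2 : ℝ) : ℂ) with hc2
  have hC1 : Compass c1 := by
    rw [hc1]
    have := half (sub hr Compass.one)
    have e : ((r:ℂ) - 1) / 2 = (((r-1)/2 : ℝ) : ℂ) := by push_cast; ring
    rwa [e] at this
  have hC2 : Compass c2 := by
    rw [hc2]
    have := neg hC1
    have e : -c1 = (((1-r)/2 : ℝ) : ℂ) := by rw [hc1]; push_cast; ring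
    rwa [e] at this
  have hm1 : Compass (-1 : ℂ) := by
    have := neg Compass.one
    simpa using this
  have hc12 : c1 ≠ c2 := by
    rw [hc1, hc2]
    intro h
    rw [Complex.ofReal_inj] at h
    apply h1
    linarith
  apply cc hC1 hm1 hC2 Compass.one hc12
  · rw [show (Real.sqrt r : ℂ) * I - c1 = ((-(r-1)/2 : ℝ):ℂ) + ((Real.sqrt r : ℝ):ℂ) * I by
        rw [hc1]; push_cast; ring,
      show (-1 : ℂ) - c1 = ((-(r+1)/2 : ℝ):ℂ) + ((0:ℝ):ℂ) * I by rw [hc1]; push_cast; ring,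
      habs2 (-(r-1)/2) (Real.sqrt r) ((r+1)/2) (by linarith) (by nlinarith),
      habs2 (-(r+1)/2) 0 ((r+1)/2) (by linarith) (by nlinarith)]
  · rw [show (Real.sqrt r : ℂ) * I - c2 = (((r-1)/2 : ℝ):ℂ) + ((Real.sqrt r : ℝ):ℂ) * I by
        rw [hc2]; push_cast; ring,
      show (1 : ℂ) - c2 = (((r+1)/2 : ℝ):ℂ) + ((0:ℝ):ℂ) * I by rw [hc2]; push_cast; ring,
      habs2 ((r-1)/2) (Real.sqrt r) ((r+1)/2) (by linarith) (by nlinarith),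
      habs2 ((r+1)/2) 0 ((r+1)/2) (by linarith) (by nlinarith)]

/-- `I` is constructable. -/
lemma i : Compass I := by
  have h4 : Compass (((4:ℝ)):ℂ) := by
    have := add (add Compass.one Compass.one) (add Compass.one Compass.one)
    have e : (1:ℂ) + 1 + (1 + 1) = ((4:ℝ):ℂ) := by norm_num
    rwa [e] at this
  have := sqrt_mul_I h4 (by norm_num) (by norm_num)
  have e : (Real.sqrt 4 : ℂ) * I = 2 * I := by
    rw [show Real.sqrt 4 = 2 by
      rw [show (4:ℝ) = 2^2 by norm_num, Real.sqrt_sq (by norm_num)]]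
    push_cast
    ring
  rw [e] at this
  have hm := mid this Compass.zero
  have e2 : (2 * I + 0) / 2 = I := by ring
  rwa [e2] at hm

/-- Real square roots of constructable nonnegative reals. -/
lemma sqrtR {r : ℝ} (hr : Compass ((r:ℝ):ℂ)) (h0 : 0 ≤ r) :
    Compass ((Real.sqrt r : ℝ):ℂ) := by
  rcases eq_or_ne r 1 with rfl | h1
  · simpa using Compass.one
  have h := mul (sqrt_mul_I hr h0 h1) (neg i)
  have e : (Real.sqrt r : ℂ) * I * (-I) = ((Real.sqrt r : ℝ):ℂ) := by
    rw [show (Real.sqrt r : ℂ) * I * (-I) = (Real.sqrt r : ℂ) * (- (I*I)) by ring, Complex.I_mul_I]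
    ring
  rwa [e] at h

/-- The real part of a constructable point is constructable. -/
lemma re_c {w : ℂ} (hw : Compass w) : Compass ((w.re : ℝ):ℂ) := by
  have := half (add hw (conj hw))
  rw [Complex.add_conj] at this
  have e : ((2 * w.re : ℝ):ℂ) / 2 = ((w.re : ℝ):ℂ) := by push_cast; ring
  rwa [e] at this

/-- The imaginary part of a constructable point is constructable (as a real point). -/
lemma im_c {w : ℂ} (hw : Compass w) : Compass ((w.im : ℝ):ℂ) := by
  have h2I : Compass (2 * I) := by
    have := add i i
    have e : I + I = 2 * I := by ring
    rwa [e] at this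
  have := mul (sub hw (conj hw)) (inv h2I)
  rw [Complex.sub_conj] at this
  have e : ((2 * w.im : ℝ):ℂ) * I * (2*I)⁻¹ = ((w.im : ℝ):ℂ) := by
    have h2Ine : (2*I : ℂ) ≠ 0 := by
      simp [Complex.I_ne_zero]
    field_simp
    push_cast
    ring
  rwa [e] at this

/-- A real number packaged as a constructable point from products of re/im parts. -/
lemma line_circle_case {A B C D z : ℂ} (hA : Compass A) (hB : Compass B) (hC : Compass C)
    (hD : Compass D) (hAB : A ≠ B) (t : ℝ) (hz : z = A + (t:ℂ) * (B - A))
    (habs : ‖z - C‖ = ‖D - C‖) : Compass z := by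
  set u : ℂ := B - A with hu
  set v : ℂ := A - C with hv
  have hu0 : u ≠ 0 := sub_ne_zero.mpr hAB.symm
  set α : ℝ := normSq u with hα
  set β : ℝ := u.re * v.re + u.im * v.im with hβ
  set γ : ℝ := normSq v - normSq (D - C) with hγ
  have hα0 : 0 < α := normSq_pos.mpr hu0
  have hns := abs_eq_abs_iff_normSq.mp habs
  have hquad : α * t^2 + 2*β*t + γ = 0 := by
    rw [hz, hu] at hns
    simp only [Complex.normSq_apply, Complex.add_re, Complex.add_im, Complex.sub_re,
      Complex.sub_im, Complex.mul_re, Complex.mul_im, Complex.ofReal_re, Complex.ofReal_im] at hns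
    rw [hα, hβ, hγ, hu, hv]
    simp only [Complex.normSq_apply, Complex.sub_re, Complex.sub_im]
    linear_combination hns
  have hdisc : (α*t + β)^2 = β^2 - α*γ := by linear_combination α * hquad
  have hdisc0 : 0 ≤ β^2 - α*γ := hdisc ▸ sq_nonneg _
  set s : ℝ := Real.sqrt (β^2 - α*γ) with hs
  have hs2 : s^2 = β^2 - α*γ := Real.sq_sqrt hdisc0
  have hfact : (α*t + β - s) * (α*t + β + s) = 0 := by linear_combination hdisc - hs2
  -- constructability of the real coefficients
  have hu_c : Compass u := sub hB hA
  have hv_c : Compass v := sub hA hC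
  have hα_c : Compass ((α:ℝ):ℂ) := by
    rw [hα, ← Complex.mul_conj]
    exact mul hu_c (conj hu_c)
  have hβ_c : Compass ((β:ℝ):ℂ) := by
    have h1 := mul (re_c hu_c) (re_c hv_c)
    have h2 := mul (im_c hu_c) (im_c hv_c)
    have := add h1 h2
    rw [hβ]
    push_cast
    exact this
  have hγ_c : Compass ((γ:ℝ):ℂ) := by
    have h1 : Compass ((normSq v : ℝ):ℂ) := by
      rw [← Complex.mul_conj]; exact mul hv_c (conj hv_c)
    have h2 : Compass ((normSq (D - C) : ℝ):ℂ) := by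
      rw [← Complex.mul_conj]; exact mul (sub hD hC) (conj (sub hD hC))
    have := sub h1 h2
    rw [hγ]
    push_cast
    exact this
  have hdisc_c : Compass (((β^2 - α*γ : ℝ)):ℂ) := by
    have := sub (mul hβ_c hβ_c) (mul hα_c hγ_c)
    push_cast
    push_cast at this
    convert this using 1
    ring
  have hs_c : Compass ((s:ℝ):ℂ) := sqrtR hdisc_c hdisc0
  have hαne : (α:ℝ) ≠ 0 := ne_of_gt hα0
  have ht_c : Compass ((t:ℝ):ℂ) := by
    rcases mul_eq_zero.mp hfact with h | h
    · have ht : t = (s - β)/α := by field_simp; linarith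
      rw [ht]
      have := mul (sub hs_c hβ_c) (inv hα_c)
      push_cast
      rw [div_eq_mul_inv]
      push_cast at this
      exact this
    · have ht : t = (-s - β)/α := by field_simp; linarith
      rw [ht]
      have := mul (sub (neg hs_c) hβ_c) (inv hα_c)
      push_cast
      rw [div_eq_mul_inv]
      push_cast at this
      exact this
  rw [hz]
  exact add hA (mul ht_c hu_c)

lemma line_line_case {A B C D z : ℂ} (hA : Compass A) (hB : Compass B) (hC : Compass C)
    (hD : Compass D) (hAB : A ≠ B) (hCD : C ≠ D)
    (hne : affineSpan ℝ ({A, B} : Set ℂ) ≠ affineSpan ℝ ({C, D} : Set ℂ))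
    (t s : ℝ) (h1 : z = A + (t:ℂ) * (B - A)) (h2 : z = C + (s:ℂ) * (D - C)) :
    Compass z := by
  set u : ℂ := B - A with hu
  set v : ℂ := D - C with hv
  have hu0 : u ≠ 0 := sub_ne_zero.mpr hAB.symm
  have hv0 : v ≠ 0 := sub_ne_zero.mpr hCD.symm
  have hzm1 : z ∈ affineSpan ℝ ({A, B} : Set ℂ) := by
    have e : z = t • (B -ᵥ A) +ᵥ A := by
      rw [h1, hu]
      simp only [vsub_eq_sub, vadd_eq_add, Complex.real_smul]
      ring
    rw [e]
    exact smul_vsub_vadd_mem_affineSpan_pair t A B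
  have hzm2 : z ∈ affineSpan ℝ ({C, D} : Set ℂ) := by
    have e : z = s • (D -ᵥ C) +ᵥ C := by
      rw [h2, hv]
      simp only [vsub_eq_sub, vadd_eq_add, Complex.real_smul]
      ring
    rw [e]
    exact smul_vsub_vadd_mem_affineSpan_pair s C D
  set Δ : ℝ := u.re * v.im - u.im * v.re with hΔdef
  have hΔ : Δ ≠ 0 := by
    intro hzero
    apply hne
    set α : ℝ := normSq u with hα
    have hα0 : α ≠ 0 := ne_of_gt (normSq_pos.mpr hu0)
    set k : ℝ := (u.re * v.re + u.im * v.im) / α with hk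
    have hkey : v * ((α:ℝ):ℂ) = ((u.re * v.re + u.im * v.im : ℝ):ℂ) * u := by
      apply Complex.ext
      · simp only [Complex.mul_re, Complex.ofReal_re, Complex.ofReal_im, Complex.normSq_apply, hα]
        linear_combination (-u.im) * hzero
      · simp only [Complex.mul_im, Complex.ofReal_re, Complex.ofReal_im, Complex.normSq_apply, hα]
        linear_combination u.re * hzero
    have hkey2 := hkey
    push_cast at hkey2
    have hvk : v = k • u := by
      rw [Complex.real_smul, hk]
      push_cast
      rw [div_mul_eq_mul_div, eq_div_iff (by exact_mod_cast hα0)]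
      linear_combination hkey2
    have hk0 : k ≠ 0 := by
      intro h
      rw [h, zero_smul] at hvk
      exact hv0 hvk
    apply AffineSubspace.ext_of_direction_eq
    · rw [direction_affineSpan, direction_affineSpan, vectorSpan_pair, vectorSpan_pair,
        vsub_eq_sub, vsub_eq_sub]
      have e : C - D = k • (A - B) := by
        have : C - D = -v := by rw [hv]; ring
        rw [this, hvk, hu]
        rw [Complex.real_smul, Complex.real_smul]
        ring
      rw [e, Submodule.span_singleton_smul_eq (isUnit_iff_ne_zero.mpr hk0) _]
    · exact ⟨z, hzm1, hzm2⟩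
  -- now solve for t
  have e := h1.symm.trans h2
  have hre := congrArg Complex.re e
  have him := congrArg Complex.im e
  simp only [Complex.add_re, Complex.add_im, Complex.mul_re, Complex.mul_im,
    Complex.ofReal_re, Complex.ofReal_im] at hre him
  set N : ℝ := (C - A).re * v.im - (C - A).im * v.re with hN
  have htval : t * Δ = N := by
    rw [hN, hΔdef]
    simp only [Complex.sub_re, Complex.sub_im]
    linear_combination v.im * hre - v.re * him
  have ht : t = N / Δ := by
    field_simp
    linarith [htval]
  -- constructability
  have hu_c : Compass u := sub hB hA
  have hv_c : Compass v := sub hD hC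
  have hCA_c : Compass (C - A) := sub hC hA
  have hN_c : Compass ((N:ℝ):ℂ) := by
    have := sub (mul (re_c hCA_c) (im_c hv_c)) (mul (im_c hCA_c) (re_c hv_c))
    rw [hN]
    push_cast
    exact this
  have hΔ_c : Compass ((Δ:ℝ):ℂ) := by
    have := sub (mul (re_c hu_c) (im_c hv_c)) (mul (im_c hu_c) (re_c hv_c))
    rw [hΔdef]
    push_cast
    exact this
  have ht_c : Compass ((t:ℝ):ℂ) := by
    rw [ht]
    have := mul hN_c (inv hΔ_c)
    push_cast
    rw [div_eq_mul_inv]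
    exact this
  rw [h1]
  exact add hA (mul ht_c hu_c)

end Compass

lemma mem_line_pair {A B z : ℂ} (h : z ∈ affineSpan ℝ ({A, B} : Set ℂ)) :
    ∃ t : ℝ, z = A + (t:ℂ) * (B - A) := by
  have h2 : (z - A) +ᵥ A ∈ line[ℝ, A, B] := by
    simpa [vadd_eq_add, sub_add_cancel] using h
  obtain ⟨r, hr⟩ := vadd_left_mem_affineSpan_pair.mp h2
  rw [vsub_eq_sub, Complex.real_smul] at hr
  exact ⟨r, by linear_combination -hr⟩

/-- Mohr–Mascheroni: every point constructable with ruler and compass is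
constructable with compass alone. -/
theorem mohr_mascheroni :
    {z : ℂ | RulerCompass z} = {z : ℂ | Compass z} := by
  ext z
  simp only [Set.mem_setOf_eq]
  constructor
  · intro h
    induction h with
    | zero => exact Compass.zero
    | one => exact Compass.one
    | line_line A B C D z hA hB hC hD hAB hCD hne hm1 hm2 ihA ihB ihC ihD =>
        obtain ⟨t, ht⟩ := mem_line_pair hm1
        obtain ⟨s, hs⟩ := mem_line_pair hm2
        exact Compass.line_line_case ihA ihB ihC ihD hAB hCD hne t s ht hs
    | line_circle A B C D z hA hB hC hD hAB hm habs ihA ihB ihC ihD =>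
        obtain ⟨t, ht⟩ := mem_line_pair hm
        exact Compass.line_circle_case ihA ihB ihC ihD hAB t ht habs
    | circle_circle a b c d z ha hb hc hd h1 h2 hne iha ihb ihc ihd =>
        exact Compass.circle_circle a b c d z iha ihb ihc ihd h1 h2 hne
  · intro h
    induction h with
    | zero => exact RulerCompass.zero
    | one => exact RulerCompass.one
    | circle_circle a b c d z ha hb hc hd h1 h2 hne iha ihb ihc ihd =>
        exact RulerCompass.circle_circle a b c d z iha ihb ihc ihd h1 h2 hne
end
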